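/- The group 𝔖• = G(A,S) is generated by the families {a_i : i ≥ 1} and {s_i : i ≥ 1}, where a_i = A_{1^{i−1}} and s_i = S_{1^{i−1}}, and the relations R_as completed with the torsion relations s_i² = 1 make a presentation of 𝔖• in terms of these generators: the canonical homomorphism from the group presented by generators {a_i, s_i : i ≥ 1} and the relations R_as together with s_i² = 1 to 𝔖• is an isomorphism. -/

import Mathlib

/-- Coloured trees: finite rooted binary trees whose leaves are labelled by
positive integers. -/
inductive CTree : Type
  | leaf : ℕ+ → CTree
  | node : CTree → CTree → CTree

/-- Partial maps on coloured trees, as a monoid under reversed composition: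
`(f * g) t = (f t).bind g`, i.e. `f * g` means "`f` then `g`". -/
abbrev PMap : Type := CTree → Option CTree

instance : Monoid PMap where
  one := fun t => some t
  mul f g := fun t => (f t).bind g
  mul_assoc f g h := by
    funext t
    show ((f t).bind g).bind h = (f t).bind fun u => (g u).bind h
    cases f t <;> rfl
  one_mul f := rfl
  mul_one f := by
    funext t
    show (f t).bind some = f t
    cases f t <;> rfl

/-- The associativity operator `A`: maps `t₁·(t₂·t₃)` to `(t₁·t₂)·t₃`. -/
def opA : PMap
  | .node t₁ (.node t₂ t₃) => some (.node (.node t₁ t₂) t₃)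
  | _ => none

/-- The inverse partial map of `A`: maps `(t₁·t₂)·t₃` to `t₁·(t₂·t₃)`. -/
def opAi : PMap
  | .node (.node t₁ t₂) t₃ => some (.node t₁ (.node t₂ t₃))
  | _ => none

/-- The commutativity operator `C`: maps `t₁·t₂` to `t₂·t₁` (its own inverse
as a partial map). -/
def opC : PMap
  | .node t₁ t₂ => some (.node t₂ t₁)
  | _ => none

/-- The semi-commutativity operator `S`: maps `t₁·(t₂·t₃)` to `t₂·(t₁·t₃)`
(its own inverse as a partial map). -/
def opS : PMap
  | .node t₁ (.node t₂ t₃) => some (.node t₂ (.node t₁ t₃))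
  | _ => none

/-- Addresses: finite words over `{0,1}`, with `false` = 0 (left) and `true` = 1
(right). -/
abbrev Addr := List Bool

/-- `applyAt α f` is the shifted operator `∂_α f`, applying `f` to the
`α`-subtree of its argument. -/
def applyAt : Addr → PMap → PMap
  | [], f => f
  | false :: α, f => fun t => match t with
      | .node t₁ t₂ => (applyAt α f t₁).map (fun s => .node s t₂)
      | _ => none
  | true :: α, f => fun t => match t with
      | .node t₁ t₂ => (applyAt α f t₂).map (fun s => .node t₁ s)
      | _ => none

/-- Two partial maps are near-equal if they are both defined on at least one common
element, and they agree wherever both are defined. -/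
def NearEq (f g : PMap) : Prop :=
  (∃ t, (f t).isSome ∧ (g t).isSome) ∧
  ∀ t, (f t).isSome → (g t).isSome → f t = g t

/-- The generators of the geometry monoid `𝒢(A,S)`: the operators `A_α`, `S_α`
and their inverse partial maps (`S_α` is its own inverse). -/
def genAS : Set PMap :=
  {f | ∃ α : Addr, f = applyAt α opA ∨ f = applyAt α opAi ∨ f = applyAt α opS}

/-- The geometry monoid `𝒢(A,S)` of associativity and semi-commutativity. -/
def GeoAS : Submonoid PMap := Submonoid.closure genAS

/-- The operator `a_{n+1} = A_{1^n}` (index `n : ℕ` stands for subscript `n+1`). -/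
def opa (n : ℕ) : PMap := applyAt (List.replicate n true) opA

/-- The operator `s_{n+1} = S_{1^n}`. -/
def ops (n : ℕ) : PMap := applyAt (List.replicate n true) opS

theorem mema (n : ℕ) : opa n ∈ GeoAS :=
  Submonoid.subset_closure ⟨List.replicate n true, Or.inl rfl⟩

theorem mems (n : ℕ) : ops n ∈ GeoAS :=
  Submonoid.subset_closure ⟨List.replicate n true, Or.inr (Or.inr rfl)⟩

/-- Formal generators `a_{n+1}`, `s_{n+1}` (index `n : ℕ` stands for subscript `n+1`). -/
inductive GenAs : Type
  | a : ℕ → GenAs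
  | s : ℕ → GenAs

def fa (n : ℕ) : FreeGroup GenAs := FreeGroup.of (GenAs.a n)
def fs (n : ℕ) : FreeGroup GenAs := FreeGroup.of (GenAs.s n)

/-- `fx b n` is `a` for `b = false` and `s` for `b = true`. -/
def fx : Bool → ℕ → FreeGroup GenAs
  | false, n => fa n
  | true, n => fs n

/-- The relations `R_as` together with the torsion relations `s_i² = 1`, as
relators (index `n` stands for subscript `i = n+1`, and `j = i+2+k`):
`a_i·x_{j-1} = x_j·a_i` and `s_i·x_j = x_j·s_i` for `j ≥ i+2`, `x ∈ {a,s}`;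
`s_i·s_{i+1}·s_i = s_{i+1}·s_i·s_{i+1}`; `s_{i+1}·s_i·a_{i+1} = a_i·s_i`;
`s_i·s_{i+1}·a_i = a_{i+1}·s_i`; and `s_i² = 1`. -/
def relsas : Set (FreeGroup GenAs) :=
  {x | (∃ (b : Bool) (n k : ℕ),
      x = fa n * fx b (n + 1 + k) * (fx b (n + 2 + k) * fa n)⁻¹) ∨
    (∃ (b : Bool) (n k : ℕ),
      x = fs n * fx b (n + 2 + k) * (fx b (n + 2 + k) * fs n)⁻¹) ∨
    (∃ n : ℕ, x = fs n * fs (n + 1) * fs n * (fs (n + 1) * fs n * fs (n + 1))⁻¹) ∨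
    (∃ n : ℕ, x = fs (n + 1) * fs n * fa (n + 1) * (fa n * fs n)⁻¹) ∨
    (∃ n : ℕ, x = fs n * fs (n + 1) * fa n * (fa (n + 1) * fs n)⁻¹) ∨
    (∃ n : ℕ, x = fs n * fs n)}

section Layer0

open CTree

lemma pm_mul_apply (f g : PMap) (t : CTree) : (f * g) t = (f t).bind g := rfl

lemma pm_one_apply (t : CTree) : (1 : PMap) t = some t := rfl

/-- shift: apply `f` to the right subtree. -/
def Sh (f : PMap) : PMap := applyAt [true] f

lemma Sh_apply (f : PMap) (t₁ t₂ : CTree) :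
    Sh f (CTree.node t₁ t₂) = (f t₂).map (fun s => CTree.node t₁ s) := rfl

lemma Sh_apply_leaf (f : PMap) (n : ℕ+) : Sh f (CTree.leaf n) = none := rfl

lemma applyAt_true_cons (α : Addr) (f : PMap) :
    applyAt (true :: α) f = Sh (applyAt α f) := rfl

lemma Sh_mul (f g : PMap) : Sh (f * g) = Sh f * Sh g := by
  funext t
  cases t with
  | leaf => rfl
  | node t₁ t₂ =>
    show ((f * g) t₂).map _ = ((f t₂).map _).bind (Sh g)
    rw [pm_mul_apply]
    cases h : f t₂ <;> simp [Sh_apply]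

lemma opa_succ (n : ℕ) : opa (n + 1) = Sh (opa n) := by
  rw [opa, List.replicate_succ]; rfl

lemma ops_succ (n : ℕ) : ops (n + 1) = Sh (ops n) := by
  rw [ops, List.replicate_succ]; rfl

lemma opa_zero : opa 0 = opA := rfl
lemma ops_zero : ops 0 = opS := rfl

/-- the operator x (a or s) at index n : `false` = a, `true` = s -/
def opx : Bool → ℕ → PMap
  | false, n => opa n
  | true, n => ops n

lemma opx_succ (b : Bool) (n : ℕ) : opx b (n + 1) = Sh (opx b n) := by
  cases b <;> simp [opx, opa_succ, ops_succ]

lemma opx_as_applyAt (b : Bool) (n : ℕ) :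
    opx b n = applyAt (List.replicate n true) (opx b 0) := by
  induction n with
  | zero => rfl
  | succ n ih => rw [opx_succ, ih, List.replicate_succ, applyAt_true_cons]

end Layer0

section Layer1

/-- Family 1 base: `a₁ ⬝ X_{1^{k+1}} = X_{1^{k+2}} ⬝ a₁` as genuine function equality,
for arbitrary `g`. -/
lemma fam1_base (g : PMap) (k : ℕ) :
    (opA : PMap) * applyAt (List.replicate (k+1) true) g
      = applyAt (List.replicate (k+2) true) g * opA := by
  funext t
  rw [List.replicate_succ, List.replicate_succ, List.replicate_succ]
  cases t with
  | leaf => rfl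
  | node t₁ t₂ =>
    cases t₂ with
    | leaf =>
      rfl
    | node t₂₁ t₂₂ =>
      rw [pm_mul_apply, pm_mul_apply]
      show Option.bind (some (CTree.node (.node t₁ t₂₁) t₂₂)) _ = _
      rw [applyAt_true_cons, applyAt_true_cons, applyAt_true_cons]
      cases h : applyAt (List.replicate k true) g t₂₂ <;>
        simp [Sh_apply, h, opA]

/-- Family 2 base: `s₁ ⬝ X_{1^{k+2}} = X_{1^{k+2}} ⬝ s₁` as function equality. -/
lemma fam2_base (g : PMap) (k : ℕ) :
    (opS : PMap) * applyAt (List.replicate (k+2) true) g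
      = applyAt (List.replicate (k+2) true) g * opS := by
  funext t
  rw [List.replicate_succ, List.replicate_succ]
  cases t with
  | leaf => rfl
  | node t₁ t₂ =>
    cases t₂ with
    | leaf =>
      rfl
    | node t₂₁ t₂₂ =>
      rw [pm_mul_apply, pm_mul_apply]
      show Option.bind (some (CTree.node t₂₁ (.node t₁ t₂₂))) _ = _
      rw [applyAt_true_cons, applyAt_true_cons]
      cases h : applyAt (List.replicate k true) g t₂₂ <;>
        simp [Sh_apply, h, opS]

lemma braid_base : (opS : PMap) * Sh opS * opS = Sh opS * opS * Sh opS := by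
  funext t
  rcases t with n | ⟨t₁, t₂⟩
  · rfl
  rcases t₂ with n | ⟨t₂₁, t₂₂⟩
  · rfl
  rcases t₂₂ with n | ⟨t₃, t₄⟩ <;> rfl

lemma mixed1_base : Sh opS * opS * Sh opA = (opA : PMap) * opS := by
  funext t
  rcases t with n | ⟨t₁, t₂⟩
  · rfl
  rcases t₂ with n | ⟨t₂₁, t₂₂⟩
  · rfl
  rcases t₂₂ with n | ⟨t₃, t₄⟩ <;> rfl

lemma mixed2_base : (opS : PMap) * Sh opS * opA = Sh opA * opS := by
  funext t
  rcases t with n | ⟨t₁, t₂⟩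
  · rfl
  rcases t₂ with n | ⟨t₂₁, t₂₂⟩
  · rfl
  rcases t₂₂ with n | ⟨t₃, t₄⟩ <;> rfl

/-- general relator equalities by shifting the base cases -/
lemma fam1_eq (b : Bool) (n k : ℕ) :
    opa n * opx b (n + 1 + k) = opx b (n + 2 + k) * opa n := by
  induction n with
  | zero =>
    have h := fam1_base (opx b 0) k
    rw [← opx_as_applyAt, ← opx_as_applyAt] at h
    simpa [opa_zero, Nat.add_comm] using h
  | succ n ih =>
    have e1 : n + 1 + 1 + k = (n + 1 + k) + 1 := by omega
    have e2 : n + 1 + 2 + k = (n + 2 + k) + 1 := by omega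
    rw [e1, e2, opa_succ, opx_succ, opx_succ, ← Sh_mul, ← Sh_mul, ih]

lemma fam2_eq (b : Bool) (n k : ℕ) :
    ops n * opx b (n + 2 + k) = opx b (n + 2 + k) * ops n := by
  induction n with
  | zero =>
    have h := fam2_base (opx b 0) k
    rw [← opx_as_applyAt] at h
    simpa [ops_zero, Nat.add_comm] using h
  | succ n ih =>
    have e1 : n + 1 + 2 + k = (n + 2 + k) + 1 := by omega
    rw [e1, ops_succ, opx_succ, ← Sh_mul, ← Sh_mul, ih]

lemma braid_eq (n : ℕ) :
    ops n * ops (n+1) * ops n = ops (n+1) * ops n * ops (n+1) := by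
  induction n with
  | zero => simpa [ops_zero, ops_succ] using braid_base
  | succ n ih =>
    simp only [ops_succ] at ih ⊢
    simp only [← Sh_mul]
    rw [ih]

lemma mixed1_eq (n : ℕ) :
    ops (n+1) * ops n * opa (n+1) = opa n * ops n := by
  induction n with
  | zero => simpa [ops_zero, opa_zero, ops_succ, opa_succ] using mixed1_base
  | succ n ih =>
    simp only [ops_succ, opa_succ] at ih ⊢
    simp only [← Sh_mul]
    rw [ih]

lemma mixed2_eq (n : ℕ) :
    ops n * ops (n+1) * opa n = opa (n+1) * ops n := by
  induction n with
  | zero => simpa [ops_zero, opa_zero, ops_succ, opa_succ] using mixed2_base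
  | succ n ih =>
    simp only [ops_succ, opa_succ] at ih ⊢
    simp only [← Sh_mul]
    rw [ih]

/-- torsion : sₙ is an involution where defined -/
lemma ops_invol (n : ℕ) : ∀ t u : CTree, ops n t = some u → ops n u = some t := by
  induction n with
  | zero =>
    rintro (m | ⟨t₁, m | ⟨t₂, t₃⟩⟩) u h <;> simp [ops_zero, opS] at h <;> subst h <;> rfl
  | succ n ih =>
    rintro (m | ⟨t₁, t₂⟩) u h
    · simp [ops_succ, Sh_apply_leaf] at h
    · rw [ops_succ, Sh_apply] at h
      rcases h' : ops n t₂ with _ | v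
      · rw [h'] at h; simp at h
      · rw [h'] at h
        simp at h
        subst h
        rw [ops_succ, Sh_apply, ih _ _ h']
        rfl

end Layer1

section Layer2

/-- complete binary tree of depth d -/
def fullT : ℕ → CTree
  | 0 => .leaf 1
  | d+1 => .node (fullT d) (fullT d)

/-- `t` is complete to depth `d` -/
def good : ℕ → CTree → Prop
  | 0, _ => True
  | _+1, .leaf _ => False
  | d+1, .node t₁ t₂ => good d t₁ ∧ good d t₂

@[simp] lemma good_zero (t : CTree) : good 0 t := trivial
@[simp] lemma good_succ_leaf (d : ℕ) (n : ℕ+) : ¬ good (d+1) (.leaf n) := fun h => h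
@[simp] lemma good_succ_node (d : ℕ) (t₁ t₂ : CTree) :
    good (d+1) (.node t₁ t₂) ↔ good d t₁ ∧ good d t₂ := Iff.rfl

lemma good_mono : ∀ (t : CTree) {d d' : ℕ}, d' ≤ d → good d t → good d' t := by
  intro t
  induction t with
  | leaf n =>
    intro d d' h hg
    cases d' with
    | zero => trivial
    | succ d' => cases d with
      | zero => omega
      | succ d => exact absurd hg (good_succ_leaf d n)
  | node t₁ t₂ ih₁ ih₂ =>
    intro d d' h hg
    cases d' with
    | zero => trivial
    | succ d' => cases d with
      | zero => omega
      | succ d => exact ⟨ih₁ (by omega) hg.1, ih₂ (by omega) hg.2⟩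

lemma good_fullT : ∀ d, good d (fullT d) := by
  intro d
  induction d with
  | zero => trivial
  | succ d ih => exact ⟨ih, ih⟩

def isGen3 (f : PMap) : Prop := f = opA ∨ f = opAi ∨ f = opS

lemma gen3_good {f : PMap} (hf : isGen3 f) {t : CTree} {d : ℕ}
    (h : good (d+2) t) : ∃ u, f t = some u ∧ good (d+1) u := by
  obtain ⟨t₁, t₂, rfl, h₁, h₂⟩ : ∃ t₁ t₂, t = .node t₁ t₂ ∧ good (d+1) t₁ ∧ good (d+1) t₂ := by
    cases t with
    | leaf n => exact absurd h (good_succ_leaf _ _)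
    | node t₁ t₂ => exact ⟨t₁, t₂, rfl, h.1, h.2⟩
  have nodeGood : ∀ (u v : CTree), good d u → good d v → good (d+1) (.node u v) := by
    intro u v hu hv; exact ⟨hu, hv⟩
  rcases hf with rfl | rfl | rfl
  · -- opA : needs t₂ a node
    obtain ⟨t₃, t₄, rfl, h₃, h₄⟩ : ∃ t₃ t₄, t₂ = .node t₃ t₄ ∧ good d t₃ ∧ good d t₄ := by
      cases t₂ with
      | leaf n => exact absurd h₂ (good_succ_leaf _ _)
      | node t₃ t₄ => exact ⟨t₃, t₄, rfl, h₂.1, h₂.2⟩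
    refine ⟨.node (.node t₁ t₃) t₄, rfl, ?_, good_mono _ (by omega) h₄⟩
    cases d with
    | zero => trivial
    | succ d => exact ⟨good_mono _ (by omega) h₁, good_mono _ (by omega) h₃⟩
  · -- opAi : needs t₁ a node
    obtain ⟨t₃, t₄, rfl, h₃, h₄⟩ : ∃ t₃ t₄, t₁ = .node t₃ t₄ ∧ good d t₃ ∧ good d t₄ := by
      cases t₁ with
      | leaf n => exact absurd h₁ (good_succ_leaf _ _)
      | node t₃ t₄ => exact ⟨t₃, t₄, rfl, h₁.1, h₁.2⟩
    refine ⟨.node t₃ (.node t₄ t₂), rfl, good_mono _ (by omega) h₃, ?_⟩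
    cases d with
    | zero => trivial
    | succ d => exact ⟨good_mono _ (by omega) h₄, good_mono _ (by omega) h₂⟩
  · -- opS
    obtain ⟨t₃, t₄, rfl, h₃, h₄⟩ : ∃ t₃ t₄, t₂ = .node t₃ t₄ ∧ good d t₃ ∧ good d t₄ := by
      cases t₂ with
      | leaf n => exact absurd h₂ (good_succ_leaf _ _)
      | node t₃ t₄ => exact ⟨t₃, t₄, rfl, h₂.1, h₂.2⟩
    refine ⟨.node t₃ (.node t₁ t₄), rfl, good_mono _ (by omega) h₃, ?_⟩
    cases d with
    | zero => trivial
    | succ d => exact ⟨good_mono _ (by omega) h₁, good_mono _ (by omega) h₄⟩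

lemma applyAt_good {f : PMap} (hf : isGen3 f) :
    ∀ (α : Addr) {t : CTree} {d : ℕ}, good (α.length + d + 2) t →
      ∃ u, applyAt α f t = some u ∧ good (α.length + d + 1) u := by
  intro α
  induction α with
  | nil => intro t d h; exact gen3_good hf h
  | cons c α ih =>
    intro t d h
    obtain ⟨t₁, t₂, rfl, h₁, h₂⟩ :
        ∃ t₁ t₂, t = .node t₁ t₂ ∧ good (α.length + d + 2) t₁ ∧ good (α.length + d + 2) t₂ := by
      cases t with
      | leaf n => exact absurd h (good_succ_leaf _ _)
      | node t₁ t₂ =>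
        have : (c :: α).length + d + 2 = (α.length + d + 2) + 1 := by simp; omega
        rw [this] at h
        exact ⟨t₁, t₂, rfl, h.1, h.2⟩
    have hl : (c :: α).length + d + 1 = (α.length + d + 1) + 1 := by simp; omega
    cases c with
    | false =>
      obtain ⟨u, hu, hgu⟩ := ih h₁
      refine ⟨.node u t₂, ?_, ?_⟩
      · show (applyAt α f t₁).map _ = _
        rw [hu]; rfl
      · rw [hl]
        exact ⟨hgu, good_mono _ (by omega) h₂⟩
    | true =>
      obtain ⟨u, hu, hgu⟩ := ih h₂
      refine ⟨.node t₁ u, ?_, ?_⟩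
      · show (applyAt α f t₂).map _ = _
        rw [hu]; rfl
      · rw [hl]
        exact ⟨good_mono _ (by omega) h₁, hgu⟩

/-- atoms of the geometry monoid -/
def pick : Fin 3 → PMap
  | 0 => opA
  | 1 => opAi
  | 2 => opS

lemma pick_isGen3 (i : Fin 3) : isGen3 (pick i) := by
  fin_cases i
  · exact Or.inl rfl
  · exact Or.inr (Or.inl rfl)
  · exact Or.inr (Or.inr rfl)

abbrev Atom := Addr × Fin 3

def apm (x : Atom) : PMap := applyAt x.1 (pick x.2)

lemma apm_mem (x : Atom) : apm x ∈ GeoAS := by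
  apply Submonoid.subset_closure
  refine ⟨x.1, ?_⟩
  rcases pick_isGen3 x.2 with h | h | h
  · exact Or.inl (by rw [apm, h])
  · exact Or.inr (Or.inl (by rw [apm, h]))
  · exact Or.inr (Or.inr (by rw [apm, h]))

def evalW (l : List Atom) : PMap := (l.map apm).prod

@[simp] lemma evalW_nil : evalW [] = 1 := rfl
@[simp] lemma evalW_cons (x : Atom) (l : List Atom) :
    evalW (x :: l) = apm x * evalW l := by
  simp [evalW]
@[simp] lemma evalW_append (l₁ l₂ : List Atom) :
    evalW (l₁ ++ l₂) = evalW l₁ * evalW l₂ := by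
  simp [evalW]

lemma evalW_mem (l : List Atom) : evalW l ∈ GeoAS := by
  induction l with
  | nil => exact one_mem _
  | cons x l ih => rw [evalW_cons]; exact mul_mem (apm_mem x) ih

def wbound : List Atom → ℕ
  | [] => 0
  | x :: l => x.1.length + wbound l + 2

lemma evalW_good : ∀ (l : List Atom) {t : CTree} {d : ℕ}, good (wbound l + d) t →
    ∃ u, evalW l t = some u ∧ good d u := by
  intro l
  induction l with
  | nil => intro t d h; exact ⟨t, rfl, by simpa [wbound] using h⟩
  | cons x l ih =>
    intro t d h
    have h' : good (x.1.length + (wbound l + d) + 2) t := by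
      have : x.1.length + (wbound l + d) + 2 = wbound (x :: l) + d := by
        simp [wbound]; omega
      rwa [this]
    obtain ⟨u, hu, hgu⟩ := applyAt_good (pick_isGen3 x.2) x.1 h'
    obtain ⟨v, hv, hgv⟩ := ih
      (good_mono u (show wbound l + d ≤ x.1.length + (wbound l + d) + 1 by omega) hgu)
    refine ⟨v, ?_, hgv⟩
    rw [evalW_cons, pm_mul_apply]
    show (applyAt x.1 (pick x.2) t).bind _ = _
    rw [hu]
    exact hv

lemma evalW_def_fullT (l : List Atom) (d : ℕ) (h : wbound l ≤ d) :
    (evalW l (fullT d)).isSome := by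
  obtain ⟨u, hu, -⟩ := evalW_good l (t := fullT d) (d := 0)
    (by simpa using good_mono _ (by omega) (good_fullT d))
  rw [hu]; rfl

/-- two word maps always have a common point of definition -/
lemma evalW_common (l₁ l₂ : List Atom) :
    ∃ t, (evalW l₁ t).isSome ∧ (evalW l₂ t).isSome := by
  refine ⟨fullT (max (wbound l₁) (wbound l₂)), ?_, ?_⟩
  · exact evalW_def_fullT _ _ (le_max_left _ _)
  · exact evalW_def_fullT _ _ (le_max_right _ _)

/-- near-equality from agreement, for word maps -/
lemma nearEq_of_agree {l₁ l₂ : List Atom} {f g : PMap}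
    (hf : f = evalW l₁) (hg : g = evalW l₂)
    (h : ∀ t u v, f t = some u → g t = some v → u = v) : NearEq f g := by
  subst hf hg
  refine ⟨evalW_common l₁ l₂, ?_⟩
  intro t h₁ h₂
  obtain ⟨u, hu⟩ := Option.isSome_iff_exists.1 h₁
  obtain ⟨v, hv⟩ := Option.isSome_iff_exists.1 h₂
  rw [hu, hv, h t u v hu hv]

end Layer2

section Layer3

/-- apply f to the left subtree -/
def Sh0 (f : PMap) : PMap := applyAt [false] f

lemma Sh0_apply (f : PMap) (t₁ t₂ : CTree) :
    Sh0 f (CTree.node t₁ t₂) = (f t₁).map (fun s => CTree.node s t₂) := rfl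

lemma applyAt_false_cons (α : Addr) (f : PMap) :
    applyAt (false :: α) f = Sh0 (applyAt α f) := rfl

/-- T3: `X_{00β} = A⁻¹ ⬝ X_{0β} ⬝ A` -/
lemma transT3 (h : PMap) (β : Addr) :
    applyAt (false :: false :: β) h = opAi * (applyAt (false :: β) h * opA) := by
  funext t
  rcases t with n | ⟨t₁, t₂⟩
  · rfl
  rcases t₁ with n | ⟨t₁₁, t₁₂⟩
  · rfl
  cases r : applyAt β h t₁₁ <;>
    simp [pm_mul_apply, applyAt_false_cons, Sh0_apply, r, opA, opAi]

/-- T4: `X_{01β} = A⁻¹ ⬝ X_{10β} ⬝ A` -/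
lemma transT4 (h : PMap) (β : Addr) :
    applyAt (false :: true :: β) h = opAi * (applyAt (true :: false :: β) h * opA) := by
  funext t
  rcases t with n | ⟨t₁, t₂⟩
  · rfl
  rcases t₁ with n | ⟨t₁₁, t₁₂⟩
  · rfl
  cases r : applyAt β h t₁₂ <;>
    simp [pm_mul_apply, applyAt_true_cons, applyAt_false_cons, Sh_apply, Sh0_apply, r,
      opA, opAi]

/-- T2 : `A_{[0]} = A⁻¹ ⬝ (A_{[1]})⁻¹ ⬝ A ⬝ A` -/
lemma transT2 : applyAt [false] opA = opAi * (Sh opAi * (opA * opA)) := by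
  funext t
  rcases t with n | ⟨t₁, t₂⟩
  · rfl
  rcases t₁ with n | ⟨t₁₁, t₁₂⟩
  · rfl
  rcases t₁₂ with n | ⟨x, y⟩ <;> rfl

/-- T1 : `S_{[0]} = A⁻¹ ⬝ S ⬝ A⁻¹ ⬝ S_{[1]} ⬝ A_{[1]} ⬝ A` -/
lemma transT1 : applyAt [false] opS = opAi * (opS * (opAi * (Sh opS * (Sh opA * opA)))) := by
  funext t
  rcases t with n | ⟨t₁, t₂⟩
  · rfl
  rcases t₁ with n | ⟨t₁₁, t₁₂⟩
  · rfl
  rcases t₁₂ with n | ⟨x, y⟩ <;> rfl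

/-- strong inverse pairs of partial maps -/
def invPair (f g : PMap) : Prop := ∀ t u, f t = some u ↔ g u = some t

lemma invPair_opA : invPair opA opAi := by
  rintro (n | ⟨t₁, n' | ⟨t₂, t₃⟩⟩) (m | ⟨m₂ | ⟨u₁, u₂⟩, u₃⟩) <;>
    constructor <;> intro h <;> simp [opA, opAi] at h ⊢ <;> tauto

lemma invPair_opS : invPair opS opS := by
  rintro (n | ⟨t₁, n | ⟨t₂, t₃⟩⟩) (m | ⟨u₁, m' | ⟨u₂, u₃⟩⟩) <;>
    constructor <;> intro h <;> simp [opS] at h ⊢ <;> tauto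

lemma invPair_symm {f g : PMap} (h : invPair f g) : invPair g f :=
  fun t u => (h u t).symm

lemma Sh0_apply_leaf (f : PMap) (n : ℕ+) : Sh0 f (CTree.leaf n) = none := rfl

lemma invPair_Sh0 {f g : PMap} (h : invPair f g) : invPair (Sh0 f) (Sh0 g) := by
  intro t u
  constructor
  · intro hh
    rcases t with n | ⟨t₁, t₂⟩
    · rw [Sh0_apply_leaf] at hh; exact absurd hh (by simp)
    · rw [Sh0_apply] at hh
      rcases hv : f t₁ with _ | v
      · rw [hv] at hh; simp at hh
      · rw [hv] at hh; simp at hh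
        subst hh
        rw [Sh0_apply, (h t₁ v).1 hv]
        rfl
  · intro hh
    rcases u with m | ⟨u₁, u₂⟩
    · rw [Sh0_apply_leaf] at hh; exact absurd hh (by simp)
    · rw [Sh0_apply] at hh
      rcases hv : g u₁ with _ | v
      · rw [hv] at hh; simp at hh
      · rw [hv] at hh; simp at hh
        subst hh
        rw [Sh0_apply, (h v u₁).2 hv]
        rfl

lemma invPair_Sh {f g : PMap} (h : invPair f g) : invPair (Sh f) (Sh g) := by
  intro t u
  constructor
  · intro hh
    rcases t with n | ⟨t₁, t₂⟩
    · rw [Sh_apply_leaf] at hh; exact absurd hh (by simp)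
    · rw [Sh_apply] at hh
      rcases hv : f t₂ with _ | v
      · rw [hv] at hh; simp at hh
      · rw [hv] at hh; simp at hh
        subst hh
        rw [Sh_apply, (h t₂ v).1 hv]
        rfl
  · intro hh
    rcases u with m | ⟨u₁, u₂⟩
    · rw [Sh_apply_leaf] at hh; exact absurd hh (by simp)
    · rw [Sh_apply] at hh
      rcases hv : g u₂ with _ | v
      · rw [hv] at hh; simp at hh
      · rw [hv] at hh; simp at hh
        subst hh
        rw [Sh_apply, (h v u₂).2 hv]
        rfl

lemma invPair_applyAt {f g : PMap} (h : invPair f g) :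
    ∀ (α : Addr), invPair (applyAt α f) (applyAt α g) := by
  intro α
  induction α with
  | nil => exact h
  | cons c α ih =>
    cases c
    · exact invPair_Sh0 ih
    · exact invPair_Sh ih

lemma invPair_mul {f₁ g₁ f₂ g₂ : PMap} (h₁ : invPair f₁ g₁) (h₂ : invPair f₂ g₂) :
    invPair (f₁ * f₂) (g₂ * g₁) := by
  intro t u
  rw [pm_mul_apply, pm_mul_apply]
  constructor
  · intro h
    rcases hv : f₁ t with _ | v
    · rw [hv] at h; simp at h
    · rw [hv] at h; simp at h
      rw [(h₂ v u).1 h]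
      simpa using (h₁ t v).1 hv
  · intro h
    rcases hv : g₂ u with _ | v
    · rw [hv] at h; simp at h
    · rw [hv] at h; simp at h
      rw [(h₁ t v).2 h]
      simpa using (h₂ v u).2 hv

lemma invPair_one : invPair 1 1 := by
  intro t u
  simp [pm_one_apply, eq_comm]

lemma invPair_unique {f g g' : PMap} (h : invPair f g) (h' : invPair f g') : g = g' := by
  funext u
  rcases hv : g u with _ | t
  · rcases hv' : g' u with _ | t'
    · rfl
    · have : g u = some t' := (h t' u).1 ((h' t' u).2 hv')
      rw [hv] at this; exact absurd this (by simp)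
  · have : g' u = some t := (h' t u).1 ((h t u).2 hv)
    rw [this]

end Layer3

section Layer4

/-- shift an atom to the right subtree -/
def shAtom (x : Atom) : Atom := (true :: x.1, x.2)

@[simp] lemma apm_shAtom (x : Atom) : apm (shAtom x) = Sh (apm x) := rfl

lemma evalW_shift (l : List Atom) (hl : l ≠ []) :
    evalW (l.map shAtom) = Sh (evalW l) := by
  induction l with
  | nil => exact absurd rfl hl
  | cons x l ih =>
    cases l with
    | nil => simp [evalW]
    | cons y l' =>
      rw [List.map_cons, evalW_cons, evalW_cons, Sh_mul, apm_shAtom,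
        ih (by simp)]

/-- the word for `A_α` (first component) and `S_α` (second component) in terms of
comb-address atoms -/
def trans2 : Addr → List Atom × List Atom
  | [] => ([([], 0)], [([], 2)])
  | true :: α =>
      (((trans2 α).1.map shAtom), ((trans2 α).2.map shAtom))
  | [false] =>
      ([([], 1), ([true], 1), ([], 0), ([], 0)],
       [([], 1), ([], 2), ([], 1), ([true], 2), ([true], 0), ([], 0)])
  | false :: false :: β =>
      (([], 1) :: (trans2 (false :: β)).1 ++ [(([], 0) : Atom)],
       ([], 1) :: (trans2 (false :: β)).2 ++ [(([], 0) : Atom)])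
  | false :: true :: β =>
      (([], 1) :: (trans2 (false :: β)).1.map shAtom ++ [(([], 0) : Atom)],
       ([], 1) :: (trans2 (false :: β)).2.map shAtom ++ [(([], 0) : Atom)])
termination_by α => α.length
decreasing_by all_goals (simp; try omega)

def isComb (x : Atom) : Prop := ∃ n, x.1 = List.replicate n true

lemma shAtom_isComb {x : Atom} (h : isComb x) : isComb (shAtom x) := by
  obtain ⟨n, hn⟩ := h
  exact ⟨n + 1, by simp [shAtom, hn, List.replicate_succ]⟩

lemma trans2_ne : ∀ α : Addr, (trans2 α).1 ≠ [] ∧ (trans2 α).2 ≠ [] := by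
  intro α
  induction α using trans2.induct with
  | case1 => simp [trans2]
  | case2 α ih => rw [trans2]; exact ⟨by simp [ih.1], by simp [ih.2]⟩
  | case3 => simp [trans2]
  | case4 β ih => simp [trans2]
  | case5 β ih => simp [trans2]

lemma trans2_comb : ∀ α : Addr,
    (∀ x ∈ (trans2 α).1, isComb x) ∧ (∀ x ∈ (trans2 α).2, isComb x) := by
  intro α
  induction α using trans2.induct with
  | case1 =>
    constructor <;>
      · intro x hx
        rw [trans2] at hx
        simp only [List.mem_singleton] at hx
        subst hx
        exact ⟨0, rfl⟩
  | case2 α ih =>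
    constructor <;>
      · intro x hx
        rw [trans2] at hx
        simp only [List.mem_map] at hx
        obtain ⟨y, hy⟩ := hx
        obtain ⟨hmem, rfl⟩ := hy
        exact shAtom_isComb (by first | exact ih.1 y hmem | exact ih.2 y hmem)
  | case3 =>
    constructor <;>
      · intro x hx
        rw [trans2] at hx
        fin_cases hx <;> first | exact ⟨0, rfl⟩ | exact ⟨1, rfl⟩
  | case4 β ih =>
    constructor <;>
      · intro x hx
        rw [trans2] at hx
        simp only [List.mem_cons, List.mem_append] at hx
        rcases hx with (h | h) | (h | h)
        · subst h; exact ⟨0, rfl⟩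
        · first | exact ih.1 x h | exact ih.2 x h
        · subst h; exact ⟨0, rfl⟩
        · exact absurd h List.not_mem_nil
  | case5 β ih =>
    constructor <;>
      · intro x hx
        rw [trans2] at hx
        simp only [List.mem_cons, List.mem_append, List.mem_map] at hx
        rcases hx with (h | h) | (h | h)
        · subst h; exact ⟨0, rfl⟩
        · obtain ⟨y, hy⟩ := h
          obtain ⟨hmem, rfl⟩ := hy
          exact shAtom_isComb (by first | exact ih.1 y hmem | exact ih.2 y hmem)
        · subst h; exact ⟨0, rfl⟩
        · exact absurd h List.not_mem_nil

lemma trans2_corr : ∀ α : Addr,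
    applyAt α opA = evalW (trans2 α).1 ∧ applyAt α opS = evalW (trans2 α).2 := by
  intro α
  induction α using trans2.induct with
  | case1 => constructor <;> simp [trans2, evalW, apm, pick]
  | case2 α ih =>
    rw [trans2]
    constructor <;>
      rw [evalW_shift _ (by first | exact (trans2_ne α).1 | exact (trans2_ne α).2),
        applyAt_true_cons]
    · rw [ih.1]
    · rw [ih.2]
  | case3 =>
    rw [trans2]
    constructor
    · simpa [evalW, apm, pick, mul_assoc, applyAt, Sh] using transT2
    · simpa [evalW, apm, pick, mul_assoc, applyAt, Sh] using transT1
  | case4 β ih =>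
    rw [trans2]
    constructor
    · rw [transT3 opA β, ih.1]
      simp [evalW, apm, pick, mul_assoc, applyAt]
    · rw [transT3 opS β, ih.2]
      simp [evalW, apm, pick, mul_assoc, applyAt]
  | case5 β ih =>
    rw [trans2]
    constructor
    · rw [transT4 opA β, applyAt_true_cons, ih.1,
        ← evalW_shift _ (trans2_ne (false :: β)).1]
      simp [evalW, apm, pick, mul_assoc, applyAt]
    · rw [transT4 opS β, applyAt_true_cons, ih.2,
        ← evalW_shift _ (trans2_ne (false :: β)).2]
      simp [evalW, apm, pick, mul_assoc, applyAt]

end Layer4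

section Layer5

/-- inverse of an atom -/
def invFin : Fin 3 → Fin 3
  | 0 => 1
  | 1 => 0
  | 2 => 2

def invAtom (x : Atom) : Atom := (x.1, invFin x.2)

lemma invPair_pick (i : Fin 3) : invPair (pick i) (pick (invFin i)) := by
  fin_cases i
  · exact invPair_opA
  · exact invPair_symm invPair_opA
  · exact invPair_opS

lemma invPair_apm (x : Atom) : invPair (apm x) (apm (invAtom x)) :=
  invPair_applyAt (invPair_pick x.2) x.1

lemma nearEq_one_of_restrict_id {l : List Atom} {f : PMap} (hf : f = evalW l)
    (h : ∀ t u, f t = some u → u = t) : NearEq f 1 := by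
  constructor
  · refine ⟨fullT (wbound l), ?_, rfl⟩
    rw [hf]
    exact evalW_def_fullT _ _ le_rfl
  · intro t h1 _
    obtain ⟨u, hu⟩ := Option.isSome_iff_exists.1 h1
    rw [hu, h t u hu]
    rfl

lemma nearEq_mul_invAtom (x : Atom) : NearEq (apm x * apm (invAtom x)) 1 := by
  refine nearEq_one_of_restrict_id (l := [x, invAtom x]) (by simp [evalW]) ?_
  intro t u h
  rw [pm_mul_apply] at h
  rcases hv : apm x t with _ | v
  · rw [hv] at h; simp at h
  · rw [hv] at h; simp at h
    have h2 : apm (invAtom x) v = some t := (invPair_apm x t v).1 hv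
    rw [h] at h2
    exact (Option.some_injective _ h2)

variable {G : Type*} [Group G] (q : GeoAS →* G)

lemma q_congr {f g : PMap} (h : f = g) (hf : f ∈ GeoAS) (hg : g ∈ GeoAS) :
    q ⟨f, hf⟩ = q ⟨g, hg⟩ := by subst h; rfl

lemma q_mul (f g : PMap) (hf : f ∈ GeoAS) (hg : g ∈ GeoAS) :
    q ⟨f * g, mul_mem hf hg⟩ = q ⟨f, hf⟩ * q ⟨g, hg⟩ :=
  map_mul q ⟨f, hf⟩ ⟨g, hg⟩

variable (hiff : ∀ f g : GeoAS, q f = q g ↔ NearEq f.1 g.1)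

include hiff

lemma q_eq_one_of_nearEq {f : PMap} (hf : f ∈ GeoAS) (h : NearEq f 1) :
    q ⟨f, hf⟩ = 1 := by
  have := (hiff ⟨f, hf⟩ 1).2 h
  rwa [map_one] at this

lemma q_apm_inv (x : Atom) :
    q ⟨apm (invAtom x), apm_mem _⟩ = (q ⟨apm x, apm_mem x⟩)⁻¹ := by
  have h1 : q ⟨apm x * apm (invAtom x), mul_mem (apm_mem x) (apm_mem _)⟩ = 1 :=
    q_eq_one_of_nearEq q hiff _ (nearEq_mul_invAtom x)
  rw [q_mul] at h1
  exact (inv_eq_of_mul_eq_one_right h1).symm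

/-- the generating set of part 1 -/
def genSetG : Set G := {x : G | ∃ n : ℕ, x = q ⟨opa n, mema n⟩ ∨ x = q ⟨ops n, mems n⟩}

lemma comb_atom_mem (x : Atom) (hx : isComb x) :
    q ⟨apm x, apm_mem x⟩ ∈ Subgroup.closure (genSetG q) := by
  obtain ⟨n, hn⟩ := hx
  obtain ⟨α, i⟩ := x
  simp only at hn
  subst hn
  obtain ⟨v, hv⟩ := i
  interval_cases v
  · exact Subgroup.subset_closure ⟨n, Or.inl rfl⟩
  · have : q ⟨apm (List.replicate n true, (1 : Fin 3)), apm_mem _⟩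
        = (q ⟨apm (List.replicate n true, (0 : Fin 3)), apm_mem _⟩)⁻¹ :=
      q_apm_inv q hiff (List.replicate n true, (0 : Fin 3))
    rw [show (⟨1, hv⟩ : Fin 3) = (1 : Fin 3) from rfl, this]
    exact inv_mem (Subgroup.subset_closure ⟨n, Or.inl rfl⟩)
  · exact Subgroup.subset_closure ⟨n, Or.inr rfl⟩

lemma comb_list_mem (l : List Atom) (hl : ∀ x ∈ l, isComb x) :
    q ⟨evalW l, evalW_mem l⟩ ∈ Subgroup.closure (genSetG q) := by
  induction l with
  | nil =>
    have : q ⟨evalW [], evalW_mem []⟩ = 1 := map_one q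
    rw [this]; exact one_mem _
  | cons x l ih =>
    have : q ⟨evalW (x :: l), evalW_mem _⟩
        = q ⟨apm x, apm_mem x⟩ * q ⟨evalW l, evalW_mem l⟩ := by
      rw [← q_mul]
      exact q_congr q (by simp) _ _
    rw [this]
    exact mul_mem (comb_atom_mem q hiff x (hl x (by simp)))
      (ih fun y hy => hl y (by simp [hy]))

lemma gen_mem (f : PMap) (hf : f ∈ genAS) :
    q ⟨f, Submonoid.subset_closure hf⟩ ∈ Subgroup.closure (genSetG q) := by
  show q ⟨f, Set.mem_of_subset_of_mem Submonoid.subset_closure hf⟩ ∈ _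
  obtain ⟨α, hα⟩ := hf
  rcases hα with rfl | rfl | rfl
  · rw [q_congr q (trans2_corr α).1 _ (evalW_mem _)]
    exact comb_list_mem q hiff _ (trans2_comb α).1
  · have h0 : applyAt α opAi = apm (invAtom (α, (0 : Fin 3))) := rfl
    rw [q_congr q h0 _ (apm_mem _), q_apm_inv q hiff]
    refine inv_mem ?_
    have h1 : apm (α, (0 : Fin 3)) = applyAt α opA := rfl
    rw [q_congr q h1 _ (Set.mem_of_subset_of_mem Submonoid.subset_closure ⟨α, Or.inl rfl⟩)]
    rw [q_congr q (trans2_corr α).1 _ (evalW_mem _)]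
    exact comb_list_mem q hiff _ (trans2_comb α).1
  · rw [q_congr q (trans2_corr α).2 _ (evalW_mem _)]
    exact comb_list_mem q hiff _ (trans2_comb α).2

lemma all_mem (f : PMap) (hf : f ∈ GeoAS) :
    q ⟨f, hf⟩ ∈ Subgroup.closure (genSetG q) := by
  induction hf using Submonoid.closure_induction with
  | mem x hx => exact gen_mem q hiff x hx
  | one =>
    have : q ⟨1, one_mem _⟩ = 1 := map_one q
    rw [this]; exact one_mem _
  | mul x y hx hy ihx ihy =>
    rw [q_mul q _ _ hx hy]
    exact mul_mem ihx ihy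

lemma part1 (hsurj : Function.Surjective q) :
    Subgroup.closure (genSetG q) = ⊤ := by
  rw [eq_top_iff]
  intro g _
  obtain ⟨⟨f, hf⟩, rfl⟩ := hsurj g
  exact all_mem q hiff f hf

end Layer5

section Layer6

variable {G : Type*} [Group G] (q : GeoAS →* G)

lemma memx (b : Bool) (n : ℕ) : opx b n ∈ GeoAS := by
  cases b
  · exact mema n
  · exact mems n

/-- the target values of the generators -/
def FG : GenAs → G
  | .a n => q ⟨opa n, mema n⟩
  | .s n => q ⟨ops n, mems n⟩

lemma FG_a (n : ℕ) : FG q (.a n) = q ⟨opa n, mema n⟩ := rfl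
lemma FG_s (n : ℕ) : FG q (.s n) = q ⟨ops n, mems n⟩ := rfl

lemma lift_fa (n : ℕ) : FreeGroup.lift (FG q) (fa n) = q ⟨opa n, mema n⟩ := by
  rw [fa, FreeGroup.lift_apply_of, FG_a]

lemma lift_fs (n : ℕ) : FreeGroup.lift (FG q) (fs n) = q ⟨ops n, mems n⟩ := by
  rw [fs, FreeGroup.lift_apply_of, FG_s]

lemma lift_fx (b : Bool) (n : ℕ) :
    FreeGroup.lift (FG q) (fx b n) = q ⟨opx b n, memx b n⟩ := by
  cases b
  · exact lift_fa q n
  · exact lift_fs q n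

lemma grel1 (b : Bool) (n k : ℕ) :
    q ⟨opa n, mema n⟩ * q ⟨opx b (n+1+k), memx _ _⟩
      = q ⟨opx b (n+2+k), memx _ _⟩ * q ⟨opa n, mema n⟩ := by
  rw [← q_mul, ← q_mul]
  exact q_congr q (fam1_eq b n k) _ _

lemma grel2 (b : Bool) (n k : ℕ) :
    q ⟨ops n, mems n⟩ * q ⟨opx b (n+2+k), memx _ _⟩
      = q ⟨opx b (n+2+k), memx _ _⟩ * q ⟨ops n, mems n⟩ := by
  rw [← q_mul, ← q_mul]
  exact q_congr q (fam2_eq b n k) _ _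

lemma grel3 (n : ℕ) :
    q ⟨ops n, mems n⟩ * q ⟨ops (n+1), mems _⟩ * q ⟨ops n, mems n⟩
      = q ⟨ops (n+1), mems _⟩ * q ⟨ops n, mems n⟩ * q ⟨ops (n+1), mems _⟩ := by
  rw [← q_mul, ← q_mul, ← q_mul, ← q_mul]
  exact q_congr q (braid_eq n) _ _

lemma grel4 (n : ℕ) :
    q ⟨ops (n+1), mems _⟩ * q ⟨ops n, mems n⟩ * q ⟨opa (n+1), mema _⟩
      = q ⟨opa n, mema n⟩ * q ⟨ops n, mems n⟩ := by
  rw [← q_mul, ← q_mul, ← q_mul]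
  exact q_congr q (mixed1_eq n) _ _

lemma grel5 (n : ℕ) :
    q ⟨ops n, mems n⟩ * q ⟨ops (n+1), mems _⟩ * q ⟨opa n, mema n⟩
      = q ⟨opa (n+1), mema _⟩ * q ⟨ops n, mems n⟩ := by
  rw [← q_mul, ← q_mul, ← q_mul]
  exact q_congr q (mixed2_eq n) _ _

lemma grel6 (hiff : ∀ f g : GeoAS, q f = q g ↔ NearEq f.1 g.1) (n : ℕ) :
    q ⟨ops n, mems n⟩ * q ⟨ops n, mems n⟩ = 1 := by
  rw [← q_mul]
  apply q_eq_one_of_nearEq q hiff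
  apply nearEq_one_of_restrict_id
    (l := [(List.replicate n true, (2 : Fin 3)), (List.replicate n true, (2 : Fin 3))])
    (by simp [evalW]; rfl)
  intro t u h
  rw [pm_mul_apply] at h
  rcases hv : ops n t with _ | v
  · rw [hv] at h; simp at h
  · rw [hv] at h; simp at h
    have h2 := ops_invol n t v hv
    rw [h] at h2
    exact Option.some_injective _ h2

lemma hrels (hiff : ∀ f g : GeoAS, q f = q g ↔ NearEq f.1 g.1) :
    ∀ r ∈ relsas, FreeGroup.lift (FG q) r = 1 := by
  intro r hr
  rcases hr with ⟨b,n,k,rfl⟩ | ⟨b,n,k,rfl⟩ | ⟨n,rfl⟩ | ⟨n,rfl⟩ | ⟨n,rfl⟩ | ⟨n,rfl⟩ <;>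
    simp only [map_mul, map_inv, lift_fa, lift_fs, lift_fx]
  · exact mul_inv_eq_one.2 (grel1 q b n k)
  · exact mul_inv_eq_one.2 (grel2 q b n k)
  · exact mul_inv_eq_one.2 (grel3 q n)
  · exact mul_inv_eq_one.2 (grel4 q n)
  · exact mul_inv_eq_one.2 (grel5 q n)
  · have := grel6 q hiff n
    rw [this]

/-- the canonical homomorphism -/
noncomputable def phi (hiff : ∀ f g : GeoAS, q f = q g ↔ NearEq f.1 g.1) :
    PresentedGroup relsas →* G :=
  PresentedGroup.toGroup (hrels q hiff)

lemma phi_of_a (hiff : ∀ f g : GeoAS, q f = q g ↔ NearEq f.1 g.1) (n : ℕ) :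
    phi q hiff (PresentedGroup.of (.a n)) = q ⟨opa n, mema n⟩ :=
  PresentedGroup.toGroup.of _

lemma phi_of_s (hiff : ∀ f g : GeoAS, q f = q g ↔ NearEq f.1 g.1) (n : ℕ) :
    phi q hiff (PresentedGroup.of (.s n)) = q ⟨ops n, mems n⟩ :=
  PresentedGroup.toGroup.of _

lemma phi_surj (hiff : ∀ f g : GeoAS, q f = q g ↔ NearEq f.1 g.1)
    (hsurj : Function.Surjective q) : Function.Surjective (phi q hiff) := by
  have hr : Subgroup.closure (genSetG q) ≤ (phi q hiff).range := by
    rw [Subgroup.closure_le]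
    rintro x ⟨n, rfl | rfl⟩
    · exact ⟨PresentedGroup.of (.a n), phi_of_a q hiff n⟩
    · exact ⟨PresentedGroup.of (.s n), phi_of_s q hiff n⟩
  rw [← MonoidHom.range_eq_top]
  rw [part1 q hiff hsurj] at hr
  exact top_le_iff.1 hr

end Layer6

section Layer7

abbrev P := PresentedGroup relsas

def mkP : FreeGroup GenAs →* P := PresentedGroup.mk relsas

def pa (n : ℕ) : P := PresentedGroup.of (.a n)
def ps (n : ℕ) : P := PresentedGroup.of (.s n)
def px : Bool → ℕ → P
  | false, n => pa n
  | true, n => ps n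

lemma mkP_fa (n : ℕ) : mkP (fa n) = pa n := rfl
lemma mkP_fs (n : ℕ) : mkP (fs n) = ps n := rfl
lemma mkP_fx (b : Bool) (n : ℕ) : mkP (fx b n) = px b n := by
  cases b
  · exact mkP_fa n
  · exact mkP_fs n

lemma mkP_rel {r : FreeGroup GenAs} (hr : r ∈ relsas) : mkP r = 1 :=
  (QuotientGroup.eq_one_iff r).2 (Subgroup.subset_normalClosure hr)

lemma prel1 (b : Bool) (n k : ℕ) :
    pa n * px b (n+1+k) = px b (n+2+k) * pa n := by
  have h := mkP_rel (Or.inl ⟨b, n, k, rfl⟩)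
  rw [map_mul, map_mul, map_inv, map_mul, mkP_fa, mkP_fx, mkP_fx] at h
  exact mul_inv_eq_one.1 h

lemma prel2 (b : Bool) (n k : ℕ) :
    ps n * px b (n+2+k) = px b (n+2+k) * ps n := by
  have h := mkP_rel (Or.inr (Or.inl ⟨b, n, k, rfl⟩))
  rw [map_mul, map_mul, map_inv, map_mul, mkP_fs, mkP_fx] at h
  exact mul_inv_eq_one.1 h

lemma prel3 (n : ℕ) :
    ps n * ps (n+1) * ps n = ps (n+1) * ps n * ps (n+1) := by
  have h := mkP_rel (Or.inr (Or.inr (Or.inl ⟨n, rfl⟩)))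
  rw [map_mul, map_mul, map_mul, map_inv, map_mul, map_mul, mkP_fs, mkP_fs] at h
  exact mul_inv_eq_one.1 h

lemma prel4 (n : ℕ) :
    ps (n+1) * ps n * pa (n+1) = pa n * ps n := by
  have h := mkP_rel (Or.inr (Or.inr (Or.inr (Or.inl ⟨n, rfl⟩))))
  rw [map_mul, map_mul, map_mul, map_inv, map_mul, mkP_fs, mkP_fs, mkP_fa, mkP_fa] at h
  exact mul_inv_eq_one.1 h

lemma prel5 (n : ℕ) :
    ps n * ps (n+1) * pa n = pa (n+1) * ps n := by
  have h := mkP_rel (Or.inr (Or.inr (Or.inr (Or.inr (Or.inl ⟨n, rfl⟩)))))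
  rw [map_mul, map_mul, map_mul, map_inv, map_mul, mkP_fs, mkP_fs, mkP_fa, mkP_fa] at h
  exact mul_inv_eq_one.1 h

lemma prel6 (n : ℕ) : ps n * ps n = 1 := by
  have h := mkP_rel (Or.inr (Or.inr (Or.inr (Or.inr (Or.inr ⟨n, rfl⟩)))))
  rw [map_mul, mkP_fs] at h
  exact h

lemma ps_inv (n : ℕ) : (ps n)⁻¹ = ps n :=
  inv_eq_of_mul_eq_one_right (prel6 n)

/-- derived relations with inequality side conditions -/
lemma pA_comm {i j : ℕ} (h : i < j) : pa i * pa j = pa (j+1) * pa i := by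
  obtain ⟨k, rfl⟩ : ∃ k, j = i + 1 + k := ⟨j - i - 1, by omega⟩
  rw [show i+1+k+1 = i+2+k from by omega]
  exact prel1 false i k

lemma pAS (i k : ℕ) : pa i * ps (i+1+k) = ps (i+2+k) * pa i := prel1 true i k

lemma pSA {i j : ℕ} (h : i + 2 ≤ j) : ps i * pa j = pa j * ps i := by
  obtain ⟨k, rfl⟩ : ∃ k, j = i + 2 + k := ⟨j - i - 2, by omega⟩
  exact prel2 false i k

lemma pSS {i j : ℕ} (h : i + 2 ≤ j) : ps i * ps j = ps j * ps i := by
  obtain ⟨k, rfl⟩ : ∃ k, j = i + 2 + k := ⟨j - i - 2, by omega⟩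
  exact prel2 true i k

def mkA (l : List ℕ) : P := (l.map pa).prod
def mkS (l : List ℕ) : P := (l.map ps).prod

@[simp] lemma mkA_nil : mkA [] = 1 := rfl
@[simp] lemma mkS_nil : mkS [] = 1 := rfl
@[simp] lemma mkA_cons (i : ℕ) (l : List ℕ) : mkA (i :: l) = pa i * mkA l := by
  simp [mkA]
@[simp] lemma mkS_cons (i : ℕ) (l : List ℕ) : mkS (i :: l) = ps i * mkS l := by
  simp [mkS]
@[simp] lemma mkA_append (l₁ l₂ : List ℕ) : mkA (l₁ ++ l₂) = mkA l₁ * mkA l₂ := by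
  simp [mkA]
@[simp] lemma mkS_append (l₁ l₂ : List ℕ) : mkS (l₁ ++ l₂) = mkS l₁ * mkS l₂ := by
  simp [mkS]
@[simp] lemma mkA_singleton (i : ℕ) : mkA [i] = pa i := by simp [mkA]
@[simp] lemma mkS_singleton (i : ℕ) : mkS [i] = ps i := by simp [mkS]

lemma mkS_inv (l : List ℕ) : (mkS l)⁻¹ = mkS l.reverse := by
  induction l with
  | nil => simp
  | cons k l ih => simp [ih, ps_inv]

/-- push a single s left through a single a -/
lemma pushD1 (j k : ℕ) : ∃ (τ : List ℕ) (j' : ℕ), pa j * ps k = mkS τ * pa j' := by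
  rcases lt_or_ge j k with h | h
  · -- k ≥ j+1
    obtain ⟨m, rfl⟩ : ∃ m, k = j + 1 + m := ⟨k - j - 1, by omega⟩
    refine ⟨[j+1+m+1], j, ?_⟩
    rw [mkS_singleton, show j+1+m+1 = j+2+m from by omega]
    exact pAS j m
  · rcases Nat.lt_or_ge (k+1) j with h2 | h2
    · -- k ≤ j - 2
      exact ⟨[k], j, by simpa using (pSA (by omega : k + 2 ≤ j)).symm⟩
    · rcases Nat.eq_or_lt_of_le h2 with h3 | h3
      · -- j = k+1
        refine ⟨[k, k+1], k, ?_⟩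
        have := prel5 k
        simp only [mkS_cons, mkS_singleton]
        rw [mul_assoc] at this ⊢
        rw [← h3] at this ⊢
        exact this.symm
      · -- j = k (since k ≤ j ≤ k+... j < k+1 combined with j ≥ k)
        have hjk : j = k := by omega
        subst hjk
        refine ⟨[j+1, j], j+1, ?_⟩
        have := prel4 j
        simp only [mkS_cons, mkS_singleton]
        rw [mul_assoc] at this ⊢
        exact this.symm

/-- push a single a right through an s-word -/
lemma pushD2 (ρ : List ℕ) : ∀ j : ℕ, ∃ (τ : List ℕ) (j' : ℕ),
    pa j * mkS ρ = mkS τ * pa j' := by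
  induction ρ with
  | nil => exact fun j => ⟨[], j, by simp⟩
  | cons k ρ ih =>
    intro j
    obtain ⟨τ₁, j₁, h₁⟩ := pushD1 j k
    obtain ⟨τ₂, j₂, h₂⟩ := ih j₁
    refine ⟨τ₁ ++ τ₂, j₂, ?_⟩
    rw [mkS_cons, ← mul_assoc, h₁, mul_assoc, h₂, mkS_append]
    group

/-- push an a-word right through an s-word -/
lemma pushD3 (u : List ℕ) : ∀ ρ : List ℕ, ∃ (τ u' : List ℕ),
    mkA u * mkS ρ = mkS τ * mkA u' := by
  induction u with
  | nil => exact fun ρ => ⟨ρ, [], by simp⟩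
  | cons j u₁ ih =>
    intro ρ
    obtain ⟨τ₁, u₁', h₁⟩ := ih ρ
    obtain ⟨τ₂, j₂, h₂⟩ := pushD2 τ₁ j
    refine ⟨τ₂, j₂ :: u₁', ?_⟩
    rw [mkA_cons, mul_assoc, h₁, ← mul_assoc, h₂, mkA_cons]
    group

/-- common left multiple of an a-word and a single a-generator -/
lemma pushD4 (u : List ℕ) : ∀ i : ℕ, ∃ (z w : List ℕ),
    mkA z * mkA u = mkA w * pa i := by
  induction u using List.reverseRecOn with
  | nil => exact fun i => ⟨[i], [], by simp⟩
  | append_singleton u₁ j ih =>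
    intro i
    rcases eq_or_ne i j with rfl | hij
    · exact ⟨[], u₁, by simp⟩
    · -- base pair : ∃ p₀ q, pa p₀ * pa j = mkA q * pa i
      obtain ⟨p₀, qw, hpq⟩ : ∃ (p₀ : ℕ) (qw : List ℕ), pa p₀ * pa j = mkA qw * pa i := by
        rcases lt_or_gt_of_ne hij with h | h
        · exact ⟨i, [j+1], by simpa using pA_comm h⟩
        · exact ⟨i+1, [j], by simpa using (pA_comm h).symm⟩
      obtain ⟨z₂, w₂, h₂⟩ := ih p₀
      refine ⟨z₂, w₂ ++ qw, ?_⟩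
      rw [mkA_append, ← mul_assoc, h₂, mkA_append, mul_assoc, mul_assoc, ← hpq]
      simp [mul_assoc]

/-- move an s-word left past an inverted a-word -/
lemma pushD6 (σ z : List ℕ) : ∃ (z' σ' : List ℕ),
    mkS σ * (mkA z)⁻¹ = (mkA z')⁻¹ * mkS σ' := by
  obtain ⟨τ, u', h⟩ := pushD3 z σ.reverse
  refine ⟨u', τ.reverse, ?_⟩
  have := congrArg (fun x => x⁻¹) h
  simp only [mul_inv_rev] at this
  rw [mkS_inv, List.reverse_reverse, mkS_inv] at this
  exact this

/-- the normal form set -/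
def NFset : Set P := {x | ∃ v σ u : List ℕ, x = (mkA v)⁻¹ * (mkS σ * mkA u)}

lemma NF_one : (1 : P) ∈ NFset := ⟨[], [], [], by simp⟩

lemma NF_mul_pa {x : P} (hx : x ∈ NFset) (i : ℕ) : x * pa i ∈ NFset := by
  obtain ⟨v, σ, u, rfl⟩ := hx
  refine ⟨v, σ, u ++ [i], ?_⟩
  simp [mul_assoc]

lemma NF_mul_ps {x : P} (hx : x ∈ NFset) (i : ℕ) : x * ps i ∈ NFset := by
  obtain ⟨v, σ, u, rfl⟩ := hx
  obtain ⟨τ, u', h⟩ := pushD3 u [i]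
  simp only [mkS_singleton] at h
  refine ⟨v, σ ++ τ, u', ?_⟩
  rw [mul_assoc, mul_assoc, h, mkS_append]
  simp [mul_assoc]

lemma NF_mul_pa_inv {x : P} (hx : x ∈ NFset) (i : ℕ) : x * (pa i)⁻¹ ∈ NFset := by
  obtain ⟨v, σ, u, rfl⟩ := hx
  obtain ⟨z, w, hzw⟩ := pushD4 u i
  have h1 : mkA u * (pa i)⁻¹ = (mkA z)⁻¹ * mkA w := by
    rw [eq_inv_mul_iff_mul_eq, ← mul_assoc, hzw]
    simp
  obtain ⟨z', σ', h2⟩ := pushD6 σ z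
  refine ⟨z' ++ v, σ', w, ?_⟩
  rw [mul_assoc, mul_assoc, h1, ← mul_assoc (mkS σ), h2]
  rw [mkA_append, mul_inv_rev]
  group

lemma NF_mul_ps_inv {x : P} (hx : x ∈ NFset) (i : ℕ) : x * (ps i)⁻¹ ∈ NFset := by
  rw [ps_inv]
  exact NF_mul_ps hx i

/-- every element of P has a normal form -/
lemma NF_all (x : P) : x ∈ NFset := by
  let S' : Subgroup P :=
    { carrier := {g : P | ∀ y ∈ NFset, y * g ∈ NFset ∧ y * g⁻¹ ∈ NFset}
      one_mem' := by
        intro y hy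
        refine ⟨by simpa using hy, by simpa using hy⟩
      mul_mem' := by
        intro g h hg hh y hy
        constructor
        · rw [← mul_assoc]
          exact (hh _ ((hg y hy).1)).1
        · rw [mul_inv_rev, ← mul_assoc]
          exact (hg _ ((hh y hy).2)).2
      inv_mem' := by
        intro g hg y hy
        refine ⟨(hg y hy).2, ?_⟩
        rw [inv_inv]
        exact (hg y hy).1 }
  have hgen : ∀ j : GenAs, PresentedGroup.of j ∈ S' := by
    intro j
    cases j with
    | a n => exact fun y hy => ⟨NF_mul_pa hy n, NF_mul_pa_inv hy n⟩
    | s n => exact fun y hy => ⟨NF_mul_ps hy n, NF_mul_ps_inv hy n⟩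
  have := PresentedGroup.generated_by relsas S' hgen x 1 NF_one
  simpa using this.1

end Layer7

section Layer8

/-- permutation word evaluation -/
def permOf (l : List ℕ) : Equiv.Perm ℕ :=
  (l.map (fun i => Equiv.swap i (i+1))).prod

@[simp] lemma permOf_nil : permOf [] = 1 := rfl
@[simp] lemma permOf_cons (i : ℕ) (l : List ℕ) :
    permOf (i :: l) = Equiv.swap i (i+1) * permOf l := by simp [permOf]
@[simp] lemma permOf_append (l₁ l₂ : List ℕ) :
    permOf (l₁ ++ l₂) = permOf l₁ * permOf l₂ := by simp [permOf]
@[simp] lemma permOf_singleton (i : ℕ) : permOf [i] = Equiv.swap i (i+1) := by simp [permOf]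

lemma permOf_outside : ∀ (l : List ℕ) (x : ℕ), (∀ j ∈ l, x ≠ j ∧ x ≠ j + 1) →
    permOf l x = x := by
  intro l
  induction l with
  | nil => intro x _; rfl
  | cons j l ih =>
    intro x hx
    rw [permOf_cons, Equiv.Perm.mul_apply, ih x fun k hk => hx k (by simp [hk])]
    exact Equiv.swap_apply_of_ne_of_ne (hx j (by simp)).1 (hx j (by simp)).2

/-- descending run `[p+L-1, ..., p]` -/
def runLen (p : ℕ) : ℕ → List ℕ
  | 0 => []
  | L+1 => (p + L) :: runLen p L

lemma runLen_mem : ∀ (L p j : ℕ), j ∈ runLen p L → p ≤ j ∧ j < p + L := by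
  intro L
  induction L with
  | zero => intro p j h; simp [runLen] at h
  | succ L ih =>
    intro p j h
    rw [runLen] at h
    rcases List.mem_cons.1 h with rfl | h
    · omega
    · have := ih p j h; omega

lemma runLen_peel : ∀ (L p : ℕ), runLen p (L+1) = runLen (p+1) L ++ [p] := by
  intro L
  induction L with
  | zero => intro p; simp [runLen]
  | succ L ih =>
    intro p
    rw [runLen, ih p]
    rw [show p + (L+1) = (p+1) + L from by omega]
    rfl

def runPerm (p L : ℕ) : Equiv.Perm ℕ := permOf (runLen p L)

lemma runPerm_peel (p L : ℕ) :
    runPerm p (L+1) = runPerm (p+1) L * Equiv.swap p (p+1) := by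
  rw [runPerm, runLen_peel, permOf_append, permOf_singleton, runPerm]

lemma runPerm_apply : ∀ (L p x : ℕ), runPerm p L x =
    if x = p ∧ 0 < L then p + L else if p < x ∧ x ≤ p + L then x - 1 else x := by
  intro L
  induction L with
  | zero =>
    intro p x
    have h0 : runPerm p 0 x = x := rfl
    rw [h0]
    split_ifs <;> omega
  | succ L ih =>
    intro p x
    rw [runPerm, runLen, permOf_cons, Equiv.Perm.mul_apply]
    have : permOf (runLen p L) x = runPerm p L x := rfl
    rw [this, ih p x, Equiv.swap_apply_def]
    split_ifs <;> omega

lemma runPerm_top (p L : ℕ) (h : 0 < L) : runPerm p L p = p + L := by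
  rw [runPerm_apply]
  simp [h]

lemma runPerm_fix {p L x : ℕ} (h : x < p ∨ p + L < x) : runPerm p L x = x := by
  rw [runPerm_apply]
  split_ifs <;> omega

/-- commuting a swap past a run which lies entirely above it -/
lemma runPerm_comm_above {p L i : ℕ} (h : i + 1 < p) :
    runPerm p L * Equiv.swap i (i+1) = Equiv.swap i (i+1) * runPerm p L := by
  ext x
  simp only [Equiv.Perm.mul_apply, runPerm_apply, Equiv.swap_apply_def]
  split_ifs <;> omega

/-- conjugating a swap through a run shifts it down -/
lemma runPerm_conj {p L i : ℕ} (hp : p < i) (hi : i + 1 ≤ p + L) :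
    runPerm p L * Equiv.swap i (i+1) = Equiv.swap (i-1) i * runPerm p L := by
  ext x
  simp only [Equiv.Perm.mul_apply, runPerm_apply, Equiv.swap_apply_def]
  split_ifs <;> omega

/-- word-level: commuting `s i` past an s-word all of whose letters are far from i -/
lemma mkS_comm_ps : ∀ (l : List ℕ) (i : ℕ), (∀ j ∈ l, j + 2 ≤ i ∨ i + 2 ≤ j) →
    mkS l * ps i = ps i * mkS l := by
  intro l
  induction l with
  | nil => intro i _; simp
  | cons j l ih =>
    intro i hl
    have hj := hl j (by simp)
    have hcomm : ps j * ps i = ps i * ps j := by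
      rcases hj with h | h
      · exact pSS h
      · exact (pSS h).symm
    rw [mkS_cons, mul_assoc, ih i fun k hk => hl k (by simp [hk]), ← mul_assoc, hcomm,
      mul_assoc]

/-- word-level: the run conjugation -/
lemma runW1 : ∀ (L p c : ℕ), c + 2 ≤ L →
    mkS (runLen p L) * ps (p+c+1) = ps (p+c) * mkS (runLen p L) := by
  intro L
  induction L with
  | zero => intro p c h; omega
  | succ L ih =>
    intro p c h
    rcases Nat.lt_or_ge (c+2) (L+1) with hlt | hge
    · -- L+1 > c+2 : peel the top letter p+L
      rw [runLen, mkS_cons, mul_assoc, ih p c (by omega), ← mul_assoc, ← mul_assoc]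
      have : ps (p + L) * ps (p + c) = ps (p + c) * ps (p + L) :=
        (pSS (by omega)).symm
      rw [this]
    · -- L + 1 = c + 2, i.e. L = c + 1 : the braid case
      have hL : L = c + 1 := by omega
      subst hL
      rw [runLen, runLen, show p + (c+1) = p + c + 1 from by omega]
      simp only [mkS_cons]
      have hcomm : mkS (runLen p c) * ps (p+c+1) = ps (p+c+1) * mkS (runLen p c) :=
        mkS_comm_ps _ _ (fun j hj => by have := runLen_mem c p j hj; omega)
      set a := ps (p+c+1)
      set b := ps (p+c)
      set X := mkS (runLen p c)
      show a * (b * X) * a = b * (a * (b * X))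
      have hbraid : b * a * b = a * b * a := prel3 (p+c)
      calc a * (b * X) * a = a * b * (X * a) := by group
        _ = a * b * (a * X) := by rw [hcomm]
        _ = (a * b * a) * X := by group
        _ = (b * a * b) * X := by rw [hbraid]
        _ = b * (a * (b * X)) := by group

/-- word-level absorption: a run followed by `s p` absorbs -/
lemma runW2 (p L : ℕ) : mkS (runLen p (L+1)) * ps p = mkS (runLen (p+1) L) := by
  rw [runLen_peel, mkS_append, mkS_singleton, mul_assoc, prel6, mul_one]

/-- the canonical (Lehmer) word of a permutation below a bound -/
def cwP : ℕ → Equiv.Perm ℕ → List ℕ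
  | 0, _ => []
  | N+1, π =>
      cwP N (π * (runPerm (π⁻¹ N) (N - π⁻¹ N))⁻¹) ++ runLen (π⁻¹ N) (N - π⁻¹ N)

lemma cwP_succ (N : ℕ) (π : Equiv.Perm ℕ) :
    cwP (N+1) π = cwP N (π * (runPerm (π⁻¹ N) (N - π⁻¹ N))⁻¹)
      ++ runLen (π⁻¹ N) (N - π⁻¹ N) := rfl

lemma cwP_one : ∀ N, cwP N 1 = [] := by
  intro N
  induction N with
  | zero => rfl
  | succ N ih =>
    rw [cwP_succ]
    have h1 : (1 : Equiv.Perm ℕ)⁻¹ N = N := rfl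
    rw [h1, Nat.sub_self]
    have h2 : runPerm N 0 = 1 := rfl
    rw [h2, runLen]
    simp [ih]

/-- the inverse-image of the top point is below the bound -/
lemma pinv_le {N : ℕ} {π : Equiv.Perm ℕ} (hsupp : ∀ x, N + 1 ≤ x → π x = x) :
    π⁻¹ N ≤ N := by
  by_contra h
  push_neg at h
  have h1 : π (π⁻¹ N) = N := π.apply_symm_apply N
  rw [hsupp _ (by omega)] at h1
  omega

/-- support of the reduced permutation -/
lemma sigma'_supp {N : ℕ} {π : Equiv.Perm ℕ} (hsupp : ∀ x, N + 1 ≤ x → π x = x) :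
    ∀ x, N ≤ x → (π * (runPerm (π⁻¹ N) (N - π⁻¹ N))⁻¹) x = x := by
  have hpN : π⁻¹ N ≤ N := pinv_le hsupp
  have hR : runPerm (π⁻¹ N) (N - π⁻¹ N) (π⁻¹ N) = N := by
    rw [runPerm_apply]
    split_ifs <;> omega
  intro x hx
  rcases Nat.eq_or_lt_of_le hx with heq | hlt
  · rw [← heq]
    have h1 : (runPerm (π⁻¹ N) (N - π⁻¹ N))⁻¹ N = π⁻¹ N := by
      rw [Equiv.Perm.inv_def]
      exact (Equiv.symm_apply_eq _).2 hR.symm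
    rw [Equiv.Perm.mul_apply, h1, Equiv.Perm.inv_def, π.apply_symm_apply]
  · have hfix : runPerm (π⁻¹ N) (N - π⁻¹ N) x = x := runPerm_fix (by omega)
    have h1 : (runPerm (π⁻¹ N) (N - π⁻¹ N))⁻¹ x = x := by
      rw [Equiv.Perm.inv_def]
      exact (Equiv.symm_apply_eq _).2 hfix.symm
    rw [Equiv.Perm.mul_apply, h1, hsupp x (by omega)]

/-- correctness of the canonical word -/
lemma cwP_perm : ∀ (N : ℕ) (π : Equiv.Perm ℕ), (∀ x, N ≤ x → π x = x) →
    permOf (cwP N π) = π := by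
  intro N
  induction N with
  | zero =>
    intro π h
    have : π = 1 := Equiv.ext fun x => h x (by omega)
    rw [this]; rfl
  | succ N ih =>
    intro π h
    rw [cwP_succ, permOf_append]
    have hsupp : ∀ x, N + 1 ≤ x → π x = x := fun x hx => h x hx
    have := ih _ (sigma'_supp hsupp)
    rw [this]
    show π * (runPerm (π⁻¹ N) (N - π⁻¹ N))⁻¹ * runPerm (π⁻¹ N) (N - π⁻¹ N) = π
    group

end Layer8

section Layer8b

lemma S_ins : ∀ (N : ℕ) (π : Equiv.Perm ℕ), (∀ x, N ≤ x → π x = x) → ∀ i, i + 1 < N →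
    mkS (cwP N π) * ps i = mkS (cwP N (π * Equiv.swap i (i+1))) := by
  intro N
  induction N with
  | zero => intro π h i hi; omega
  | succ M ih =>
    intro π hsupp i hi
    have hiM : i + 1 ≤ M := by omega
    have hp : π⁻¹ M ≤ M := pinv_le hsupp
    have hq : (π * Equiv.swap i (i+1))⁻¹ M = Equiv.swap i (i+1) (π⁻¹ M) := by
      rw [mul_inv_rev, Equiv.Perm.mul_apply, Equiv.swap_inv]
    rcases eq_or_ne (π⁻¹ M) i with hpi | hpi
    · -- case B : p = i
      have hq2 : (π * Equiv.swap i (i+1))⁻¹ M = i + 1 := by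
        rw [hq, hpi, Equiv.swap_apply_left]
      have hMi : M - i = (M - (i+1)) + 1 := by omega
      have hrp : runPerm i (M - i)
          = runPerm (i+1) (M - (i+1)) * Equiv.swap i (i+1) := by
        rw [hMi, runPerm_peel]
      have hσ : π * (runPerm i (M - i))⁻¹
          = π * Equiv.swap i (i+1) * (runPerm (i+1) (M - (i+1)))⁻¹ := by
        rw [hrp, mul_inv_rev, Equiv.swap_inv, ← mul_assoc]
      rw [cwP_succ M π, cwP_succ M (π * Equiv.swap i (i+1)), hq2, hpi,
        mkS_append, mkS_append, mul_assoc, hσ]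
      congr 1
      rw [hMi, runW2]
    · rcases eq_or_ne (π⁻¹ M) (i+1) with hpi1 | hpi1
      · -- case C : p = i+1
        have hq2 : (π * Equiv.swap i (i+1))⁻¹ M = i := by
          rw [hq, hpi1, Equiv.swap_apply_right]
        have hMi : M - i = (M - (i+1)) + 1 := by omega
        have hrp : runPerm i (M - i)
            = runPerm (i+1) (M - (i+1)) * Equiv.swap i (i+1) := by
          rw [hMi, runPerm_peel]
        have hττ : Equiv.swap i (i+1) * Equiv.swap i (i+1) = 1 :=
          Equiv.swap_mul_self i (i+1)
        have hσ : π * (runPerm (i+1) (M - (i+1)))⁻¹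
            = π * Equiv.swap i (i+1) * (runPerm i (M - i))⁻¹ := by
          rw [hrp, mul_inv_rev, Equiv.swap_inv, ← mul_assoc, mul_assoc π, hττ, mul_one]
        rw [cwP_succ M π, cwP_succ M (π * Equiv.swap i (i+1)), hq2, hpi1,
          mkS_append, mkS_append, mul_assoc, hσ]
        congr 1
        rw [hMi, runLen_peel, mkS_append, mkS_singleton]
      · -- case A : p ∉ {i, i+1}
        have hq2 : (π * Equiv.swap i (i+1))⁻¹ M = π⁻¹ M := by
          rw [hq, Equiv.swap_apply_of_ne_of_ne hpi hpi1]
        rw [cwP_succ M π, cwP_succ M (π * Equiv.swap i (i+1)), hq2,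
          mkS_append, mkS_append]
        rcases Nat.lt_or_ge (i+1) (π⁻¹ M) with hA1 | hA2
        · -- A1 : i + 1 < p
          have hcw : mkS (runLen (π⁻¹ M) (M - π⁻¹ M)) * ps i
              = ps i * mkS (runLen (π⁻¹ M) (M - π⁻¹ M)) :=
            mkS_comm_ps _ _ (fun j hj => by
              have := runLen_mem _ _ _ hj; omega)
          rw [mul_assoc, hcw, ← mul_assoc,
            ih _ (sigma'_supp hsupp) i (by omega)]
          have hRc : runPerm (π⁻¹ M) (M - π⁻¹ M) * Equiv.swap i (i+1)
              = Equiv.swap i (i+1) * runPerm (π⁻¹ M) (M - π⁻¹ M) :=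
            runPerm_comm_above hA1
          have h2 : Equiv.swap i (i+1) * (runPerm (π⁻¹ M) (M - π⁻¹ M))⁻¹
              = (runPerm (π⁻¹ M) (M - π⁻¹ M))⁻¹ * Equiv.swap i (i+1) := by
            have h3 := congrArg Inv.inv hRc
            rwa [mul_inv_rev, mul_inv_rev, Equiv.swap_inv] at h3
          have hσ : π * (runPerm (π⁻¹ M) (M - π⁻¹ M))⁻¹ * Equiv.swap i (i+1)
              = π * Equiv.swap i (i+1) * (runPerm (π⁻¹ M) (M - π⁻¹ M))⁻¹ := by
            rw [mul_assoc, ← h2, ← mul_assoc]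
          rw [hσ]
        · -- A2 : p < i
          have hpi' : π⁻¹ M < i := by omega
          have hper : mkS (runLen (π⁻¹ M) (M - π⁻¹ M)) * ps i
              = ps (i-1) * mkS (runLen (π⁻¹ M) (M - π⁻¹ M)) := by
            have h := runW1 (M - π⁻¹ M) (π⁻¹ M) (i - π⁻¹ M - 1) (by omega)
            rw [show π⁻¹ M + (i - π⁻¹ M - 1) + 1 = i from by omega,
              show π⁻¹ M + (i - π⁻¹ M - 1) = i - 1 from by omega] at h
            exact h
          rw [mul_assoc, hper, ← mul_assoc,
            ih _ (sigma'_supp hsupp) (i-1) (by omega)]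
          have hRc : runPerm (π⁻¹ M) (M - π⁻¹ M) * Equiv.swap i (i+1)
              = Equiv.swap (i-1) i * runPerm (π⁻¹ M) (M - π⁻¹ M) :=
            runPerm_conj hpi' (by omega)
          have h2 : Equiv.swap i (i+1) * (runPerm (π⁻¹ M) (M - π⁻¹ M))⁻¹
              = (runPerm (π⁻¹ M) (M - π⁻¹ M))⁻¹ * Equiv.swap (i-1) i := by
            have h3 := congrArg Inv.inv hRc
            rwa [mul_inv_rev, mul_inv_rev, Equiv.swap_inv, Equiv.swap_inv] at h3
          have hσ : π * (runPerm (π⁻¹ M) (M - π⁻¹ M))⁻¹ * Equiv.swap (i-1) (i-1+1)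
              = π * Equiv.swap i (i+1) * (runPerm (π⁻¹ M) (M - π⁻¹ M))⁻¹ := by
            rw [show i - 1 + 1 = i from by omega, mul_assoc, ← h2, ← mul_assoc]
          rw [hσ]

lemma permOf_supp (σ : List ℕ) (N : ℕ) (h : ∀ j ∈ σ, j + 1 < N) :
    ∀ x, N ≤ x → permOf σ x = x := fun x hx =>
  permOf_outside σ x (fun j hj => by have := h j hj; omega)

lemma S_main (σ : List ℕ) (N : ℕ) (h : ∀ j ∈ σ, j + 1 < N) :
    mkS σ = mkS (cwP N (permOf σ)) := by
  induction σ using List.reverseRecOn with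
  | nil => simp [cwP_one]
  | append_singleton σ₁ i ihs =>
    have h₁ : ∀ j ∈ σ₁, j + 1 < N := fun j hj => h j (by simp [hj])
    have hi : i + 1 < N := h i (by simp)
    rw [mkS_append, mkS_singleton, ihs h₁,
      S_ins N _ (permOf_supp σ₁ N h₁) i hi, permOf_append, permOf_singleton]

/-- completeness for the symmetric relations -/
lemma S_complete (σ : List ℕ) (hσ : permOf σ = 1) : mkS σ = 1 := by
  have hN : ∀ j ∈ σ, j + 1 < σ.sum + 2 := by
    intro j hj
    have := List.single_le_sum (fun (k : ℕ) _ => Nat.zero_le k) j hj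
    omega
  rw [S_main σ (σ.sum + 2) hN, hσ, cwP_one, mkS_nil]

end Layer8b

section Layer9

/-- bare binary trees (shapes) -/
inductive BT : Type
  | leaf : BT
  | node : BT → BT → BT

/-- the canonical word building `T` at position `p` -/
def wBT : BT → ℕ → List ℕ
  | .leaf, _ => []
  | .node L R, p => wBT L p ++ wBT R (p+1) ++ [p]

lemma wBT_shift : ∀ (T : BT) (p : ℕ), wBT T (p+1) = (wBT T p).map (· + 1) := by
  intro T
  induction T with
  | leaf => intro p; rfl
  | node L R ihL ihR =>
    intro p
    rw [wBT, wBT, ihL, ihR]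
    simp

/-- the canonical word of a list of shapes -/
def VW : List BT → List ℕ
  | [] => []
  | T :: rest => wBT T 0 ++ (VW rest).map (· + 1)

@[simp] lemma VW_nil : VW [] = [] := rfl

lemma VW_replicate : ∀ L, VW (List.replicate L .leaf) = [] := by
  intro L
  induction L with
  | zero => rfl
  | succ L ih => rw [List.replicate_succ]; show wBT .leaf 0 ++ _ = []; rw [ih]; rfl

/-- merge entries i and i+1 -/
def mergeBT : ℕ → List BT → List BT
  | 0, T₁ :: T₂ :: rest => .node T₁ T₂ :: rest
  | i+1, T :: rest => T :: mergeBT i rest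
  | _, l => l

lemma mergeBT_length : ∀ (i : ℕ) (l : List BT), i + 1 < l.length →
    (mergeBT i l).length = l.length - 1 := by
  intro i
  induction i with
  | zero =>
    intro l hl
    match l with
    | T₁ :: T₂ :: rest => rfl
  | succ i ih =>
    intro l hl
    match l with
    | T :: rest =>
      have h2 : i + 1 < rest.length := by simp at hl; omega
      show (T :: mergeBT i rest).length = _
      rw [List.length_cons, List.length_cons, ih rest h2]
      simp at hl
      omega

/-- commuting a low `a` leftwards -/
lemma mkA_comm_low : ∀ (l : List ℕ) (p : ℕ), (∀ m ∈ l, p + 2 ≤ m) →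
    mkA l * pa p = pa p * mkA (l.map (· - 1)) := by
  intro l
  induction l with
  | nil => intro p _; simp
  | cons m l ih =>
    intro p hl
    have hm := hl m (by simp)
    have h1 : pa m * pa p = pa p * pa (m - 1) := by
      have := pA_comm (show p < m - 1 from by omega)
      rw [show m - 1 + 1 = m from by omega] at this
      exact this.symm
    rw [List.map_cons, mkA_cons, mkA_cons, mul_assoc,
      ih p fun k hk => hl k (by simp [hk]), ← mul_assoc, h1, mul_assoc]

/-- the shift endomorphism of P -/
def shiftGen : GenAs → P
  | .a n => pa (n+1)
  | .s n => ps (n+1)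

lemma lift_shiftGen_fa (n : ℕ) : FreeGroup.lift shiftGen (fa n) = pa (n+1) := by
  rw [fa, FreeGroup.lift_apply_of]; rfl
lemma lift_shiftGen_fs (n : ℕ) : FreeGroup.lift shiftGen (fs n) = ps (n+1) := by
  rw [fs, FreeGroup.lift_apply_of]; rfl
lemma lift_shiftGen_fx (b : Bool) (n : ℕ) :
    FreeGroup.lift shiftGen (fx b n) = px b (n+1) := by
  cases b
  · exact lift_shiftGen_fa n
  · exact lift_shiftGen_fs n

lemma shift_rels : ∀ r ∈ relsas, FreeGroup.lift shiftGen r = 1 := by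
  intro r hr
  rcases hr with ⟨b,n,k,rfl⟩ | ⟨b,n,k,rfl⟩ | ⟨n,rfl⟩ | ⟨n,rfl⟩ | ⟨n,rfl⟩ | ⟨n,rfl⟩ <;>
    simp only [map_mul, map_inv, lift_shiftGen_fa, lift_shiftGen_fs, lift_shiftGen_fx]
  · refine mul_inv_eq_one.2 ?_
    rw [show n+1+k+1 = (n+1)+1+k from by omega, show n+2+k+1 = (n+1)+2+k from by omega]
    exact prel1 b (n+1) k
  · refine mul_inv_eq_one.2 ?_
    rw [show n+2+k+1 = (n+1)+2+k from by omega]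
    exact prel2 b (n+1) k
  · exact mul_inv_eq_one.2 (prel3 (n+1))
  · refine mul_inv_eq_one.2 ?_
    rw [show n+1+1 = (n+1)+1 from rfl]
    exact prel4 (n+1)
  · exact mul_inv_eq_one.2 (prel5 (n+1))
  · exact prel6 (n+1)

noncomputable def shiftP : P →* P := PresentedGroup.toGroup shift_rels

lemma shiftP_pa (n : ℕ) : shiftP (pa n) = pa (n+1) := PresentedGroup.toGroup.of _
lemma shiftP_ps (n : ℕ) : shiftP (ps n) = ps (n+1) := PresentedGroup.toGroup.of _

lemma shiftP_mkA : ∀ l : List ℕ, shiftP (mkA l) = mkA (l.map (· + 1)) := by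
  intro l
  induction l with
  | nil => simp
  | cons i l ih => rw [mkA_cons, map_mul, shiftP_pa, ih, List.map_cons, mkA_cons]

/-- the insertion lemma for canonical building words -/
lemma F_ins : ∀ (i : ℕ) (l : List BT), i + 1 < l.length →
    mkA (VW (mergeBT i l)) = mkA (VW l) * pa i := by
  intro i
  induction i with
  | zero =>
    intro l hl
    match l with
    | T₁ :: T₂ :: rest =>
      show mkA (VW (.node T₁ T₂ :: rest)) = _
      rw [VW, VW, VW, wBT]
      simp only [List.map_append, List.map_map, mkA_append]
      have hc : mkA ((VW rest).map ((· + 1) ∘ (· + 1))) * pa 0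
          = pa 0 * mkA ((VW rest).map (· + 1)) := by
        have h1 := mkA_comm_low ((VW rest).map ((· + 1) ∘ (· + 1))) 0
          (by intro m hm; simp at hm; obtain ⟨y, _, rfl⟩ := hm; omega)
        rw [List.map_map] at h1
        have h2 : ((· - 1) ∘ ((· + 1) ∘ (· + 1)) : ℕ → ℕ) = (· + 1) := by
          funext y; simp
        rw [h2] at h1
        exact h1
      rw [← wBT_shift, mkA_singleton]
      conv_rhs => rw [mul_assoc, mul_assoc, hc]
      simp only [mul_assoc]
  | succ i ih =>
    intro l hl
    match l with
    | T :: rest =>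
      show mkA (VW (T :: mergeBT i rest)) = mkA (VW (T :: rest)) * pa (i+1)
      have hlen : i + 1 < rest.length := by simp at hl; omega
      rw [VW, VW, mkA_append, mkA_append, ← shiftP_mkA, ← shiftP_mkA, ih rest hlen,
        map_mul, shiftP_pa, mul_assoc]

/-- validity of a word relative to a width -/
def validA : List ℕ → ℕ → Prop
  | [], _ => True
  | i :: u, L => i + 1 < L ∧ validA u (L - 1)

lemma validA_append : ∀ (u : List ℕ) (i : ℕ) (L : ℕ),
    validA (u ++ [i]) L ↔ validA u L ∧ i + 1 < L - u.length := by
  intro u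
  induction u with
  | nil => intro i L; simp [validA]
  | cons j u ih =>
    intro i L
    show (j + 1 < L ∧ validA (u ++ [i]) (L-1)) ↔ _
    rw [ih i (L-1)]
    constructor
    · rintro ⟨h1, h2, h3⟩
      refine ⟨⟨h1, h2⟩, ?_⟩
      simp only [List.length_cons]
      omega
    · rintro ⟨⟨h1, h2⟩, h3⟩
      simp only [List.length_cons] at h3
      exact ⟨h1, h2, by omega⟩

def buildState (L : ℕ) (u : List ℕ) : List BT :=
  u.foldl (fun st i => mergeBT i st) (List.replicate L .leaf)

lemma buildState_length : ∀ (u : List ℕ) (l : List BT), validA u l.length →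
    (u.foldl (fun st i => mergeBT i st) l).length = l.length - u.length := by
  intro u
  induction u with
  | nil => intro l _; simp
  | cons i u ih =>
    intro l hv
    obtain ⟨h1, h2⟩ := hv
    rw [List.foldl_cons]
    have hm := mergeBT_length i l h1
    have := ih (mergeBT i l) (by rw [hm]; exact h2)
    rw [this, hm, List.length_cons]
    omega

/-- every a-word equals the canonical word of the state it builds -/
lemma F_canon : ∀ (u : List ℕ) (L : ℕ), validA u L →
    mkA u = mkA (VW (buildState L u)) := by
  intro u
  induction u using List.reverseRecOn with
  | nil => intro L _; simp [buildState, VW_replicate]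
  | append_singleton u i ih =>
    intro L hv
    rw [validA_append] at hv
    obtain ⟨hv1, hv2⟩ := hv
    have hlen : (buildState L u).length = L - u.length := by
      have := buildState_length u (List.replicate L .leaf) (by simpa using hv1)
      simpa [buildState] using this
    have hb : buildState L (u ++ [i]) = mergeBT i (buildState L u) := by
      simp [buildState, List.foldl_append]
    rw [mkA_append, mkA_singleton, ih L hv1, ← F_ins i _ (by rw [hlen]; omega), hb]

end Layer9

section Layer10

def shiftSt (st : ℕ → CTree) : ℕ → CTree := fun n => st (n+1)

def actA (i : ℕ) (st : ℕ → CTree) : ℕ → CTree := fun n =>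
  if n < i then st n else if n = i then .node (st i) (st (i+1)) else st (n+1)

def actS (i : ℕ) (st : ℕ → CTree) : ℕ → CTree := fun n =>
  if n = i then st (i+1) else if n = i+1 then st i else st n

def actAw : List ℕ → (ℕ → CTree) → ℕ → CTree
  | [], st => st
  | i :: u, st => actAw u (actA i st)

def actSw : List ℕ → (ℕ → CTree) → ℕ → CTree
  | [], st => st
  | i :: σ, st => actSw σ (actS i st)

def fAw (u : List ℕ) : PMap := (u.map opa).prod
def fSw (σ : List ℕ) : PMap := (σ.map ops).prod

@[simp] lemma fAw_nil : fAw [] = 1 := rfl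
@[simp] lemma fSw_nil : fSw [] = 1 := rfl
@[simp] lemma fAw_cons (i : ℕ) (u : List ℕ) : fAw (i :: u) = opa i * fAw u := by simp [fAw]
@[simp] lemma fSw_cons (i : ℕ) (σ : List ℕ) : fSw (i :: σ) = ops i * fSw σ := by simp [fSw]

lemma fAw_mem (u : List ℕ) : fAw u ∈ GeoAS := by
  induction u with
  | nil => exact one_mem _
  | cons i u ih => rw [fAw_cons]; exact mul_mem (mema i) ih

lemma fSw_mem (σ : List ℕ) : fSw σ ∈ GeoAS := by
  induction σ with
  | nil => exact one_mem _
  | cons i σ ih => rw [fSw_cons]; exact mul_mem (mems i) ih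

def bld : ℕ → (ℕ → CTree) → CTree
  | 0, _ => .leaf 1
  | m+1, st => .node (st 0) (bld m (shiftSt st))

lemma shift_actA_zero (st : ℕ → CTree) : shiftSt (actA 0 st) = shiftSt (shiftSt st) := by
  funext n
  simp [shiftSt, actA]

lemma shift_actA_succ (i : ℕ) (st : ℕ → CTree) :
    shiftSt (actA (i+1) st) = actA i (shiftSt st) := by
  funext n
  simp only [shiftSt, actA]
  split_ifs with h1 h2 h3 h4 h5 <;> first | rfl | omega | (exfalso; omega)

lemma shift_actS_succ (i : ℕ) (st : ℕ → CTree) :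
    shiftSt (actS (i+1) st) = actS i (shiftSt st) := by
  funext n
  simp only [shiftSt, actS]
  split_ifs <;> first | rfl | omega | (exfalso; omega)

lemma actA_bld : ∀ (i : ℕ) (m : ℕ) (st : ℕ → CTree), i + 1 ≤ m →
    opa i (bld (m+1) st) = some (bld m (actA i st)) := by
  intro i
  induction i with
  | zero =>
    intro m st hm
    obtain ⟨m', rfl⟩ : ∃ m', m = m' + 1 := ⟨m - 1, by omega⟩
    rw [opa_zero]
    show opA (.node (st 0) (.node (shiftSt st 0) (bld m' (shiftSt (shiftSt st)))))
      = some (.node (actA 0 st 0) (bld m' (shiftSt (actA 0 st))))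
    rw [shift_actA_zero]
    have h0 : actA 0 st 0 = .node (st 0) (st 1) := by simp [actA]
    have h1 : shiftSt st 0 = st 1 := rfl
    rw [h0, h1]
    rfl
  | succ i ih =>
    intro m st hm
    obtain ⟨m', rfl⟩ : ∃ m', m = m' + 1 := ⟨m - 1, by omega⟩
    rw [opa_succ, bld, Sh_apply, ih m' (shiftSt st) (by omega), bld,
      shift_actA_succ]
    have h0 : actA (i+1) st 0 = st 0 := by simp [actA]
    rw [h0]
    rfl

lemma actS_bld : ∀ (i : ℕ) (m : ℕ) (st : ℕ → CTree), i + 1 ≤ m →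
    ops i (bld (m+1) st) = some (bld (m+1) (actS i st)) := by
  intro i
  induction i with
  | zero =>
    intro m st hm
    obtain ⟨m', rfl⟩ : ∃ m', m = m' + 1 := ⟨m - 1, by omega⟩
    rw [ops_zero]
    show opS (.node (st 0) (.node (shiftSt st 0) (bld m' (shiftSt (shiftSt st)))))
      = some (.node (actS 0 st 0) (.node (shiftSt (actS 0 st) 0)
          (bld m' (shiftSt (shiftSt (actS 0 st))))))
    have e : shiftSt (shiftSt (actS 0 st)) = shiftSt (shiftSt st) := by
      funext n; simp [shiftSt, actS]
    have h0 : actS 0 st 0 = st 1 := by simp [actS]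
    have h1 : shiftSt (actS 0 st) 0 = st 0 := by simp [shiftSt, actS]
    have h2 : shiftSt st 0 = st 1 := rfl
    rw [e, h0, h1, h2]
    rfl
  | succ i ih =>
    intro m st hm
    obtain ⟨m', rfl⟩ : ∃ m', m = m' + 1 := ⟨m - 1, by omega⟩
    have h0 : actS (i+1) st 0 = st 0 := by simp [actS]
    rw [ops_succ]
    show Sh (ops i) (.node (st 0) (bld (m'+1) (shiftSt st))) = _
    rw [Sh_apply, ih m' (shiftSt st) (by omega), ← shift_actS_succ]
    show some (CTree.node (st 0) (bld (m'+1) (shiftSt (actS (i+1) st))))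
      = some (bld (m'+1+1) (actS (i+1) st))
    rw [show bld (m'+1+1) (actS (i+1) st)
        = .node (actS (i+1) st 0) (bld (m'+1) (shiftSt (actS (i+1) st))) from rfl, h0]

def reqA : List ℕ → ℕ
  | [] => 0
  | i :: u => max (i + 2) (reqA u + 1)

def reqS : List ℕ → ℕ
  | [] => 0
  | i :: σ => max (i + 2) (reqS σ)

lemma fAw_bld : ∀ (u : List ℕ) (m : ℕ) (st : ℕ → CTree), reqA u ≤ m →
    fAw u (bld m st) = some (bld (m - u.length) (actAw u st)) := by
  intro u
  induction u with
  | nil => intro m st _; simp [pm_one_apply, actAw]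
  | cons i u ih =>
    intro m st hm
    rw [reqA] at hm
    obtain ⟨m', rfl⟩ : ∃ m', m = m' + 1 := ⟨m - 1, by omega⟩
    rw [fAw_cons, pm_mul_apply, actA_bld i m' st (by omega), Option.bind_some,
      ih m' (actA i st) (by omega)]
    show _ = some (bld (m' + 1 - (u.length + 1)) (actAw u (actA i st)))
    rw [show m' + 1 - (u.length + 1) = m' - u.length from by omega]

lemma fSw_bld : ∀ (σ : List ℕ) (m : ℕ) (st : ℕ → CTree), reqS σ ≤ m →
    fSw σ (bld m st) = some (bld m (actSw σ st)) := by
  intro σ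
  induction σ with
  | nil => intro m st _; simp [pm_one_apply, actSw]
  | cons i σ ih =>
    intro m st hm
    rw [reqS] at hm
    obtain ⟨m', rfl⟩ : ∃ m', m = m' + 1 := ⟨m - 1, by omega⟩
    rw [fSw_cons, pm_mul_apply, actS_bld i m' st (by omega), Option.bind_some,
      ih (m' + 1) (actS i st) (by omega)]
    rfl

lemma bld_inj : ∀ (m m' : ℕ) (s s' : ℕ → CTree),
    (∀ n, s n ≠ .leaf 1) → (∀ n, s' n ≠ .leaf 1) →
    bld m s = bld m' s' → m = m' ∧ ∀ n < m, s n = s' n := by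
  intro m
  induction m with
  | zero =>
    intro m' s s' _ hs' h
    cases m' with
    | zero => exact ⟨rfl, fun n hn => absurd hn (by omega)⟩
    | succ m' => rw [bld, bld] at h; exact absurd h (by simp)
  | succ m ih =>
    intro m' s s' hs hs' h
    cases m' with
    | zero => rw [bld, bld] at h; exact absurd h (by simp)
    | succ m' =>
      rw [bld, bld] at h
      injection h with h0 h1
      obtain ⟨hm, hrest⟩ := ih m' (shiftSt s) (shiftSt s')
        (fun n => hs (n+1)) (fun n => hs' (n+1)) h1
      refine ⟨by omega, ?_⟩
      intro n hn
      cases n with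
      | zero => exact h0
      | succ n => exact hrest n (by omega)

/-- leaf labels -/
def leavesCT : CTree → List ℕ
  | .leaf a => [(a : ℕ)]
  | .node l r => leavesCT l ++ leavesCT r

def flat : ℕ → (ℕ → CTree) → List ℕ
  | 0, _ => []
  | m+1, st => leavesCT (st 0) ++ flat m (shiftSt st)

lemma flat_congr : ∀ (m : ℕ) (s s' : ℕ → CTree), (∀ n < m, s n = s' n) →
    flat m s = flat m s' := by
  intro m
  induction m with
  | zero => intro s s' _; rfl
  | succ m ih =>
    intro s s' h
    rw [flat, flat, h 0 (by omega), ih (shiftSt s) (shiftSt s')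
      (fun n hn => h (n+1) (by omega))]

lemma flat_actA : ∀ (i m : ℕ) (st : ℕ → CTree), i + 1 ≤ m →
    flat m (actA i st) = flat (m+1) st := by
  intro i
  induction i with
  | zero =>
    intro m st hm
    obtain ⟨m', rfl⟩ : ∃ m', m = m' + 1 := ⟨m - 1, by omega⟩
    have h0 : actA 0 st 0 = .node (st 0) (st 1) := by simp [actA]
    have h2 : shiftSt st 0 = st 1 := rfl
    show leavesCT (actA 0 st 0) ++ flat m' (shiftSt (actA 0 st)) =
      leavesCT (st 0) ++ (leavesCT (shiftSt st 0) ++ flat m' (shiftSt (shiftSt st)))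
    rw [shift_actA_zero, h0, h2]
    try simp [leavesCT, List.append_assoc]

  | succ i ih =>
    intro m st hm
    obtain ⟨m', rfl⟩ : ∃ m', m = m' + 1 := ⟨m - 1, by omega⟩
    rw [flat, shift_actA_succ, ih m' (shiftSt st) (by omega)]
    have h0 : actA (i+1) st 0 = st 0 := by simp [actA]
    rw [h0]
    rfl

lemma flat_actAw : ∀ (u : List ℕ) (m : ℕ) (st : ℕ → CTree), reqA u ≤ m →
    flat (m - u.length) (actAw u st) = flat m st := by
  intro u
  induction u with
  | nil => intro m st _; rfl
  | cons i u ih =>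
    intro m st hm
    rw [reqA] at hm
    obtain ⟨m', rfl⟩ : ∃ m', m = m' + 1 := ⟨m - 1, by omega⟩
    show flat (m' + 1 - (u.length + 1)) (actAw u (actA i st)) = _
    rw [show m' + 1 - (u.length + 1) = m' - u.length from by omega,
      ih m' (actA i st) (by omega), flat_actA i m' st (by omega)]

lemma actS_eq (i : ℕ) (st : ℕ → CTree) :
    actS i st = fun m => st (Equiv.swap i (i+1) m) := by
  funext m
  simp only [actS, Equiv.swap_apply_def]
  split_ifs <;> rfl

lemma actSw_perm : ∀ (σ : List ℕ) (st : ℕ → CTree),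
    actSw σ st = fun n => st (permOf σ n) := by
  intro σ
  induction σ with
  | nil => intro st; rfl
  | cons i σ ih =>
    intro st
    show actSw σ (actS i st) = _
    rw [ih (actS i st), actS_eq]
    funext n
    rw [permOf_cons, Equiv.Perm.mul_apply]

/-- the universal stream of distinct leaves -/
def stS : ℕ → CTree := fun n => .leaf ⟨n + 2, by omega⟩

lemma flat_leafStream : ∀ (m : ℕ) (f : ℕ → ℕ),
    flat m (fun n => CTree.leaf ⟨f n + 2, by omega⟩) = (List.range m).map (fun k => f k + 2) := by
  intro m
  induction m with
  | zero => intro f; rfl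
  | succ m ih =>
    intro f
    rw [flat]
    have h1 : shiftSt (fun n => CTree.leaf (⟨f n + 2, by omega⟩ : ℕ+))
        = fun n => CTree.leaf (⟨f (n+1) + 2, by omega⟩ : ℕ+) := rfl
    rw [h1, ih (fun n => f (n+1))]
    rw [List.range_succ_eq_map]
    simp [leavesCT, List.map_map]
    try rfl

/-- streams with all labels at least 2 -/
def bigSt (s : ℕ → CTree) : Prop := ∀ n, ∀ l ∈ leavesCT (s n), 2 ≤ l

lemma bigSt_actA (i : ℕ) {s : ℕ → CTree} (hs : bigSt s) : bigSt (actA i s) := by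
  intro n l hl
  simp only [actA] at hl
  split_ifs at hl with h1 h2
  · exact hs n l hl
  · rw [leavesCT] at hl
    rcases List.mem_append.1 hl with h | h
    · exact hs i l h
    · exact hs (i+1) l h
  · exact hs (n+1) l hl

lemma bigSt_actS (i : ℕ) {s : ℕ → CTree} (hs : bigSt s) : bigSt (actS i s) := by
  intro n l hl
  simp only [actS] at hl
  split_ifs at hl <;> exact hs _ l hl

lemma bigSt_actAw : ∀ (u : List ℕ) {s : ℕ → CTree}, bigSt s → bigSt (actAw u s) := by
  intro u
  induction u with
  | nil => intro s hs; exact hs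
  | cons i u ih => intro s hs; exact ih (bigSt_actA i hs)

lemma bigSt_actSw : ∀ (σ : List ℕ) {s : ℕ → CTree}, bigSt s → bigSt (actSw σ s) := by
  intro σ
  induction σ with
  | nil => intro s hs; exact hs
  | cons i σ ih => intro s hs; exact ih (bigSt_actS i hs)

lemma bigSt_stS : bigSt stS := by
  intro n l hl
  simp only [stS, leavesCT, List.mem_singleton] at hl
  subst hl
  show 2 ≤ n + 2
  omega

lemma bigSt_ne_leaf1 {s : ℕ → CTree} (hs : bigSt s) (n : ℕ) : s n ≠ .leaf 1 := by
  intro h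
  have := hs n 1 (by rw [h]; simp [leavesCT])
  omega

/-- erasing labels -/
def erase : CTree → BT
  | .leaf _ => .leaf
  | .node l r => .node (erase l) (erase r)

lemma mergeBT_getD : ∀ (i : ℕ) (l : List BT), i + 1 < l.length → ∀ n : ℕ,
    (mergeBT i l).getD n .leaf =
      if n < i then l.getD n .leaf
      else if n = i then .node (l.getD i .leaf) (l.getD (i+1) .leaf)
      else l.getD (n+1) .leaf := by
  intro i
  induction i with
  | zero =>
    intro l hl n
    match l with
    | T₁ :: T₂ :: rest =>
      show (BT.node T₁ T₂ :: rest).getD n .leaf = _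
      cases n with
      | zero => rfl
      | succ n =>
        rw [if_neg (by omega), if_neg (by omega)]
        rfl
  | succ i ih =>
    intro l hl n
    match l with
    | T :: rest =>
      have hr : i + 1 < rest.length := by simp at hl; omega
      show (T :: mergeBT i rest).getD n .leaf = _
      cases n with
      | zero =>
        rw [if_pos (by omega : (0:ℕ) < i + 1)]
        rfl
      | succ n =>
        rw [List.getD_cons_succ, ih rest hr n]
        split_ifs <;> first | rfl | omega

lemma sim_step (i : ℕ) (st : ℕ → CTree) (l : List BT) (hi : i + 1 < l.length)
    (hm : ∀ n < l.length, erase (st n) = l.getD n .leaf) :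
    ∀ n < l.length - 1, erase (actA i st n) = (mergeBT i l).getD n .leaf := by
  intro n hn
  rw [mergeBT_getD i l hi n]
  simp only [actA]
  split_ifs with h1 h2
  · exact hm n (by omega)
  · subst h2
    rw [erase, hm n (by omega), hm (n+1) (by omega)]
  · exact hm (n+1) (by omega)

lemma simW : ∀ (u : List ℕ) (st : ℕ → CTree) (l : List BT), validA u l.length →
    (∀ n < l.length, erase (st n) = l.getD n .leaf) →
    ∀ n < l.length - u.length,
      erase (actAw u st n) = (u.foldl (fun acc i => mergeBT i acc) l).getD n .leaf := by
  intro u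
  induction u with
  | nil => intro st l _ hm n hn; exact hm n (by simpa using hn)
  | cons i u ih =>
    intro st l hv hm n hn
    obtain ⟨h1, h2⟩ := hv
    have hmlen := mergeBT_length i l h1
    have hstep := sim_step i st l h1 hm
    show erase (actAw u (actA i st) n) = (u.foldl _ (mergeBT i l)).getD n .leaf
    refine ih (actA i st) (mergeBT i l) (by rw [hmlen]; exact h2)
      (fun k hk => hstep k (by omega)) n ?_
    rw [hmlen]
    simp at hn
    omega

end Layer10

section Layer11

lemma getD_replicate_leaf : ∀ (L n : ℕ),
    (List.replicate L BT.leaf).getD n BT.leaf = BT.leaf := by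
  intro L
  induction L with
  | zero => intro n; rfl
  | succ L ih =>
    intro n
    rw [List.replicate_succ]
    cases n with
    | zero => rfl
    | succ n => rw [List.getD_cons_succ]; exact ih n

lemma validA_big : ∀ (u : List ℕ) (L : ℕ), (∀ i ∈ u, i + 1 + u.length ≤ L) →
    validA u L := by
  intro u
  induction u with
  | nil => intro L _; trivial
  | cons i u ih =>
    intro L h
    have hi := h i (by simp)
    simp only [List.length_cons] at hi
    refine ⟨by omega, ih (L-1) ?_⟩
    intro j hj
    have := h j (by simp [hj])
    simp only [List.length_cons] at this
    omega

/-- extraction of the permutation from stream equality -/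
lemma perm_eq_id (σ u v : List ℕ) (M₀ : ℕ)
    (hbnd : reqA u ≤ M₀ ∧ reqA v ≤ M₀ ∧ u.length ≤ M₀ ∧ v.length ≤ M₀)
    (hlen : u.length = v.length)
    (hstr : ∀ M', M₀ ≤ M' → ∀ n < M' - u.length,
      actAw u (actSw σ stS) n = actAw v stS n) :
    permOf σ = 1 := by
  ext k
  show permOf σ k = k
  set M' := M₀ + k + 1 with hM'
  have hM0 : M₀ ≤ M' := by omega
  have h1 : flat (M' - u.length) (actAw u (actSw σ stS)) = flat M' (actSw σ stS) :=
    flat_actAw u M' _ (by omega)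
  have h2 : flat (M' - v.length) (actAw v stS) = flat M' stS :=
    flat_actAw v M' _ (by omega)
  have h3 : flat (M' - u.length) (actAw u (actSw σ stS))
      = flat (M' - u.length) (actAw v stS) :=
    flat_congr _ _ _ (fun n hn => hstr M' hM0 n hn)
  rw [h1, hlen, h2] at h3
  -- now : flat M' (actSw σ stS) = flat M' stS
  rw [actSw_perm] at h3
  have h4 : flat M' (fun n => stS (permOf σ n))
      = (List.range M').map (fun k => permOf σ k + 2) :=
    flat_leafStream M' (fun n => permOf σ n)
  have h5 : flat M' stS = (List.range M').map (fun k => k + 2) :=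
    flat_leafStream M' (fun n => n)
  rw [h4, h5] at h3
  have h6 := congrArg (fun l => l[k]?) h3
  simp only [List.getElem?_map, List.getElem?_range (show k < M' from by omega)] at h6
  simp only [Option.map_some] at h6
  have := Option.some_injective _ h6
  omega

/-- extraction of the a-word values from stream equality -/
lemma mkA_stream_eq (u v : List ℕ) (L : ℕ)
    (hu : validA u L) (hv : validA v L) (hlen : u.length = v.length)
    (hstream : ∀ n < L - u.length, actAw u stS n = actAw v stS n) :
    mkA u = mkA v := by
  have hmatch : ∀ n < (List.replicate L BT.leaf).length,
      erase (stS n) = (List.replicate L BT.leaf).getD n BT.leaf := by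
    intro n _
    rw [getD_replicate_leaf]
    rfl
  have hlrep : (List.replicate L BT.leaf).length = L := by simp
  have hsu := simW u stS (List.replicate L BT.leaf) (by rw [hlrep]; exact hu) hmatch
  have hsv := simW v stS (List.replicate L BT.leaf) (by rw [hlrep]; exact hv) hmatch
  have hstates : buildState L u = buildState L v := by
    have hul : (buildState L u).length = L - u.length := by
      have := buildState_length u (List.replicate L BT.leaf) (by rw [hlrep]; exact hu)
      simpa [buildState, hlrep] using this
    have hvl : (buildState L v).length = L - v.length := by
      have := buildState_length v (List.replicate L BT.leaf) (by rw [hlrep]; exact hv)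
      simpa [buildState, hlrep] using this
    apply List.ext_getElem (by rw [hul, hvl, hlen])
    intro n hn1 hn2
    have hn : n < L - u.length := by rwa [hul] at hn1
    have e1 : (buildState L u).getD n BT.leaf = (buildState L u)[n] :=
      List.getD_eq_getElem _ _ hn1
    have e2 : (buildState L v).getD n BT.leaf = (buildState L v)[n] :=
      List.getD_eq_getElem _ _ hn2
    rw [← e1, ← e2]
    have g1 := hsu n (by rwa [hlrep])
    have g2 := hsv n (by rw [hlrep, ← hlen]; exact hn)
    show (List.foldl (fun acc i => mergeBT i acc) (List.replicate L BT.leaf) u).getD n BT.leaf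
      = (List.foldl (fun acc i => mergeBT i acc) (List.replicate L BT.leaf) v).getD n BT.leaf
    rw [← g1, ← g2, hstream n hn]
  rw [F_canon u L hu, F_canon v L hv, hstates]

variable {G : Type*} [Group G] (q : GeoAS →* G)
variable (hiff : ∀ f g : GeoAS, q f = q g ↔ NearEq f.1 g.1)

lemma phi_mkA : ∀ u : List ℕ, phi q hiff (mkA u) = q ⟨fAw u, fAw_mem u⟩ := by
  intro u
  induction u with
  | nil =>
    have h1 : (⟨fAw [], fAw_mem []⟩ : GeoAS) = 1 := rfl
    rw [mkA_nil, map_one, h1, map_one]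
  | cons i u ih =>
    rw [mkA_cons, map_mul, ih]
    have h1 : phi q hiff (pa i) = q ⟨opa i, mema i⟩ := phi_of_a q hiff i
    rw [h1, ← q_mul]
    exact q_congr q (fAw_cons i u).symm _ _

lemma phi_mkS : ∀ σ : List ℕ, phi q hiff (mkS σ) = q ⟨fSw σ, fSw_mem σ⟩ := by
  intro σ
  induction σ with
  | nil =>
    have h1 : (⟨fSw [], fSw_mem []⟩ : GeoAS) = 1 := rfl
    rw [mkS_nil, map_one, h1, map_one]
  | cons i σ ih =>
    rw [mkS_cons, map_mul, ih]
    have h1 : phi q hiff (ps i) = q ⟨ops i, mems i⟩ := phi_of_s q hiff i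
    rw [h1, ← q_mul]
    exact q_congr q (fSw_cons i σ).symm _ _

include hiff in
lemma phi_inj : Function.Injective (phi q hiff) := by
  rw [injective_iff_map_eq_one]
  intro x hx
  obtain ⟨v, σ, u, rfl⟩ := NF_all x
  rw [map_mul, map_mul, map_inv, phi_mkA q hiff, phi_mkA q hiff, phi_mkS q hiff] at hx
  have hq : q ⟨fSw σ * fAw u, mul_mem (fSw_mem σ) (fAw_mem u)⟩ = q ⟨fAw v, fAw_mem v⟩ := by
    rw [q_mul]
    rw [inv_mul_eq_one] at hx
    exact hx.symm
  have hne : NearEq (fSw σ * fAw u) (fAw v) := (hiff _ _).1 hq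
  set M₀ : ℕ := reqS σ + reqA u + reqA v + u.length + v.length + 2 with hM₀
  -- evaluate at big streams
  have heval : ∀ M', M₀ ≤ M' →
      bld (M' - u.length) (actAw u (actSw σ stS)) = bld (M' - v.length) (actAw v stS) := by
    intro M' hM'
    have e1 : (fSw σ * fAw u) (bld M' stS)
        = some (bld (M' - u.length) (actAw u (actSw σ stS))) := by
      rw [pm_mul_apply, fSw_bld σ M' stS (by omega), Option.bind_some,
        fAw_bld u M' _ (by omega)]
    have e2 : fAw v (bld M' stS) = some (bld (M' - v.length) (actAw v stS)) :=
      fAw_bld v M' _ (by omega)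
    have h3 := hne.2 (bld M' stS) (by rw [e1]; rfl) (by rw [e2]; rfl)
    rw [e1, e2] at h3
    exact Option.some_injective _ h3
  have hbig1 : bigSt (actAw u (actSw σ stS)) := bigSt_actAw u (bigSt_actSw σ bigSt_stS)
  have hbig2 : bigSt (actAw v stS) := bigSt_actAw v bigSt_stS
  have hkey : ∀ M', M₀ ≤ M' → M' - u.length = M' - v.length ∧
      ∀ n < M' - u.length, actAw u (actSw σ stS) n = actAw v stS n := by
    intro M' hM'
    exact bld_inj _ _ _ _ (bigSt_ne_leaf1 hbig1) (bigSt_ne_leaf1 hbig2) (heval M' hM')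
  have hlen : u.length = v.length := by
    have := (hkey M₀ le_rfl).1
    omega
  have hperm : permOf σ = 1 := by
    refine perm_eq_id σ u v M₀ ⟨by omega, by omega, by omega, by omega⟩ hlen ?_
    intro M' hM' n hn
    exact (hkey M' hM').2 n hn
  have hstream : ∀ n, actAw u stS n = actAw v stS n → True := fun _ _ => trivial
  -- actSw σ stS = stS since the permutation is trivial
  have hS1 : actSw σ stS = stS := by
    rw [actSw_perm, hperm]
    rfl
  -- choose L validating both words
  set L : ℕ := u.sum + v.sum + u.length + v.length + M₀ + 2 with hL
  have hu : validA u L := validA_big u L (fun i hi => by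
    have := List.single_le_sum (fun (k : ℕ) _ => Nat.zero_le k) i hi
    omega)
  have hv : validA v L := validA_big v L (fun i hi => by
    have := List.single_le_sum (fun (k : ℕ) _ => Nat.zero_le k) i hi
    omega)
  have hAeq : mkA u = mkA v := by
    refine mkA_stream_eq u v L hu hv hlen ?_
    intro n hn
    have := (hkey L (by omega)).2 n hn
    rwa [hS1] at this
  rw [hAeq, S_complete σ hperm, one_mul]
  group

include hiff in
theorem stmt17' (hsurj : Function.Surjective q) :
    Subgroup.closure
      ({x : G | ∃ n : ℕ, x = q ⟨opa n, mema n⟩ ∨ x = q ⟨ops n, mems n⟩}) = ⊤ ∧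
    ∃ iso : PresentedGroup relsas ≃* G,
      ∀ n : ℕ,
        iso (PresentedGroup.of (GenAs.a n)) = q ⟨opa n, mema n⟩ ∧
        iso (PresentedGroup.of (GenAs.s n)) = q ⟨ops n, mems n⟩ := by
  constructor
  · exact part1 q hiff hsurj
  · refine ⟨MulEquiv.ofBijective (phi q hiff) ⟨phi_inj q hiff, phi_surj q hiff hsurj⟩, ?_⟩
    intro n
    exact ⟨phi_of_a q hiff n, phi_of_s q hiff n⟩

end Layer11


/-- Proposition 4.5: the group `𝔖• = G(A,S)` — i.e. any group `G` obtained from the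
geometry monoid `𝒢(A,S)` by identifying near-equal elements — is generated by the
families `a` and `s`, and the relations `R_as` completed with `s_i² = 1` make a
presentation of `𝔖•` in terms of the generators `a_i = A_{1^{i-1}}` and
`s_i = S_{1^{i-1}}`. -/
theorem stmt17 (G : Type*) [Group G] (q : GeoAS →* G)
    (hsurj : Function.Surjective q)
    (hiff : ∀ f g : GeoAS, q f = q g ↔ NearEq f.1 g.1) :
    Subgroup.closure
      ({x : G | ∃ n : ℕ, x = q ⟨opa n, mema n⟩ ∨ x = q ⟨ops n, mems n⟩}) = ⊤ ∧
    ∃ iso : PresentedGroup relsas ≃* G,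
      ∀ n : ℕ,
        iso (PresentedGroup.of (GenAs.a n)) = q ⟨opa n, mema n⟩ ∧
        iso (PresentedGroup.of (GenAs.s n)) = q ⟨ops n, mems n⟩ := by
  exact stmt17' q hiff hsurj
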